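/- arXiv:1703.01044 — 4 statements merged into one kernel-verified Lean document; each statement's English description precedes it below -/
import Mathlib

section
/- Let b₀ > 0, a₀ > 0, a₁ > 0, a₂ > 0 and let (λ₁, λ₂) be a random vector with the Beta-Gamma distribution BG(b₀, a₀, a₁, a₂). Then U = λ₁ + λ₂ has the Gamma distribution with shape a₀ and rate b₀ (density (b₀^{a₀}/Γ(a₀)) u^{a₀−1} e^{−b₀ u} for u > 0), V = λ₁/(λ₁ + λ₂) has the Beta distribution with parameters a₁ and a₂ (density (Γ(a₁+a₂)/(Γ(a₁)Γ(a₂))) v^{a₁−1}(1−v)^{a₂−1} for 0 < v < 1), and U and V are independent. Equivalently, the pushforward of the BG(b₀, a₀, a₁, a₂) measure under the map (λ₁, λ₂) ↦ (λ₁ + λ₂, λ₁/(λ₁ + λ₂)) equals the product measure Gamma(a₀, b₀) ⊗ Beta(a₁, a₂). -/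
open MeasureTheory

/-- Joint density of the Beta-Gamma distribution `BG(b₀, a₀, a₁, a₂)` on `(0,∞)²`. -/
noncomputable def bgPdf (b₀ a₀ a₁ a₂ l₁ l₂ : ℝ) : ℝ :=
  if 0 < l₁ ∧ 0 < l₂ then
    Real.Gamma (a₁ + a₂) / Real.Gamma a₀ * (b₀ * (l₁ + l₂)) ^ (a₀ - a₁ - a₂) *
      (b₀ ^ a₁ / Real.Gamma a₁ * l₁ ^ (a₁ - 1) * Real.exp (-b₀ * l₁)) *
      (b₀ ^ a₂ / Real.Gamma a₂ * l₂ ^ (a₂ - 1) * Real.exp (-b₀ * l₂))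
  else 0

/-- The Beta-Gamma distribution `BG(b₀, a₀, a₁, a₂)` as a measure on `ℝ × ℝ`. -/
noncomputable def bgMeasure (b₀ a₀ a₁ a₂ : ℝ) : Measure (ℝ × ℝ) :=
  volume.withDensity fun p => ENNReal.ofReal (bgPdf b₀ a₀ a₁ a₂ p.1 p.2)

/-- Density of the Gamma distribution with shape `a` and rate `r`. -/
noncomputable def gammaPdfShapeRate (a r x : ℝ) : ℝ :=
  if 0 < x then r ^ a / Real.Gamma a * x ^ (a - 1) * Real.exp (-r * x) else 0

/-- Density of the Beta distribution with parameters `a` and `b`. -/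
noncomputable def betaPdf (a b v : ℝ) : ℝ :=
  if 0 < v ∧ v < 1 then
    Real.Gamma (a + b) / (Real.Gamma a * Real.Gamma b) * v ^ (a - 1) * (1 - v) ^ (b - 1)
  else 0

open Set
open scoped ENNReal

section Aux

lemma map_withDensity_comp' {α β : Type*} [MeasurableSpace α] [MeasurableSpace β]
    {Φ : α → β} (hΦ : Measurable Φ) {g : β → ℝ≥0∞} (hg : Measurable g) (ρ : Measure α) :
    Measure.map Φ (ρ.withDensity (g ∘ Φ)) = (Measure.map Φ ρ).withDensity g := by
  ext t ht
  rw [Measure.map_apply hΦ ht, withDensity_apply _ (hΦ ht), withDensity_apply _ ht,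
    setLIntegral_map ht hg hΦ]
  rfl

lemma prod_withDensity_volume' {f g : ℝ → ℝ} (hf : Measurable f) (hg : Measurable g) :
    (MeasureTheory.volume.withDensity fun x => ENNReal.ofReal (f x)).prod
        (MeasureTheory.volume.withDensity fun x => ENNReal.ofReal (g x))
      = (MeasureTheory.volume : Measure (ℝ × ℝ)).withDensity
          (fun p => ENNReal.ofReal (f p.1) * ENNReal.ofReal (g p.2)) := by
  refine Measure.prod_eq fun s t hs ht => ?_
  rw [withDensity_apply _ (hs.prod ht), withDensity_apply _ hs, withDensity_apply _ ht,
    Measure.volume_eq_prod, ← Measure.prod_restrict,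
    lintegral_prod_mul hf.ennreal_ofReal.aemeasurable hg.ennreal_ofReal.aemeasurable]

noncomputable def bgPhiDeriv (p : ℝ × ℝ) : ℝ × ℝ →L[ℝ] ℝ × ℝ :=
  LinearMap.toContinuousLinearMap (Matrix.toLin (Module.Basis.finTwoProd ℝ) (Module.Basis.finTwoProd ℝ)
    !![p.2, p.1; 1 - p.2, -p.1])

lemma hasFDerivAt_bgPhi (p : ℝ × ℝ) :
    HasFDerivAt (fun q : ℝ × ℝ => (q.1 * q.2, q.1 * (1 - q.2))) (bgPhiDeriv p) p := by
  unfold bgPhiDeriv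
  rw [Matrix.toLin_finTwoProd_toContinuousLinearMap]
  have h1 : HasFDerivAt (fun q : ℝ × ℝ => q.1 * q.2)
      (p.1 • ContinuousLinearMap.snd ℝ ℝ ℝ + p.2 • ContinuousLinearMap.fst ℝ ℝ ℝ) p :=
    hasFDerivAt_fst.mul hasFDerivAt_snd
  have h2 : HasFDerivAt (fun q : ℝ × ℝ => q.1 * (1 - q.2))
      (p.1 • ((0 : ℝ × ℝ →L[ℝ] ℝ) - ContinuousLinearMap.snd ℝ ℝ ℝ)
        + (1 - p.2) • ContinuousLinearMap.fst ℝ ℝ ℝ) p :=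
    hasFDerivAt_fst.mul ((hasFDerivAt_const (1:ℝ) p).sub hasFDerivAt_snd)
  convert h1.prodMk h2 using 2
  all_goals try rfl
  all_goals module

lemma bgPhiDeriv_det (p : ℝ × ℝ) : (bgPhiDeriv p).det = -p.1 := by
  unfold bgPhiDeriv
  simp only [LinearMap.det_toContinuousLinearMap, LinearMap.det_toLin, Matrix.det_fin_two_of]
  ring

lemma bg_ident {b₀ a₀ a₁ a₂ u v : ℝ} (hb₀ : 0 < b₀) (hu : 0 < u) (hv : 0 < v) (hv1 : v < 1) :
    u * bgPdf b₀ a₀ a₁ a₂ (u * v) (u * (1 - v))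
      = gammaPdfShapeRate a₀ b₀ u * betaPdf a₁ a₂ v := by
  have h1v : 0 < 1 - v := by linarith
  rw [bgPdf, if_pos ⟨mul_pos hu hv, mul_pos hu h1v⟩, gammaPdfShapeRate, if_pos hu,
    betaPdf, if_pos ⟨hv, hv1⟩]
  have e0 : u * v + u * (1 - v) = u := by ring
  rw [e0]
  rw [Real.mul_rpow hb₀.le hu.le, Real.mul_rpow hu.le hv.le, Real.mul_rpow hu.le h1v.le]
  rw [show b₀ ^ a₀ = b₀ ^ (a₀ - a₁ - a₂) * b₀ ^ a₁ * b₀ ^ a₂ by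
    rw [← Real.rpow_add hb₀, ← Real.rpow_add hb₀]; ring_nf]
  rw [show u ^ (a₀ - 1) = u * (u ^ (a₀ - a₁ - a₂) * u ^ (a₁ - 1) * u ^ (a₂ - 1)) by
    rw [show (a₀ - 1 : ℝ) = 1 + (a₀ - a₁ - a₂) + (a₁ - 1) + (a₂ - 1) by ring,
      Real.rpow_add hu, Real.rpow_add hu, Real.rpow_add hu, Real.rpow_one]
    ring]
  rw [show Real.exp (-b₀ * u) = Real.exp (-b₀ * (u * v)) * Real.exp (-b₀ * (u * (1 - v))) by
    rw [← Real.exp_add]; congr 1; ring]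
  ring

lemma measurable_gammaPdfShapeRate (a r : ℝ) : Measurable (gammaPdfShapeRate a r) := by
  unfold gammaPdfShapeRate
  exact Measurable.ite measurableSet_Ioi
    (((measurable_id'.pow_const _).const_mul _).mul (measurable_id'.const_mul _).exp)
    measurable_const

lemma measurable_betaPdf (a b : ℝ) : Measurable (betaPdf a b) := by
  unfold betaPdf
  refine Measurable.ite ?_ ?_ measurable_const
  · exact (measurableSet_Ioi.inter measurableSet_Iio :
      MeasurableSet {v : ℝ | 0 < v ∧ v < 1})
  · exact (((measurable_id'.pow_const _).const_mul _).mul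
      ((measurable_const.sub measurable_id').pow_const _))

lemma measurable_bgPdf (b₀ a₀ a₁ a₂ : ℝ) :
    Measurable fun p : ℝ × ℝ => bgPdf b₀ a₀ a₁ a₂ p.1 p.2 := by
  unfold bgPdf
  refine Measurable.ite ?_ ?_ measurable_const
  · exact ((measurableSet_Ioi.preimage measurable_fst).inter
      (measurableSet_Ioi.preimage measurable_snd) :
        MeasurableSet {p : ℝ × ℝ | 0 < p.1 ∧ 0 < p.2})
  · refine Measurable.mul (Measurable.mul (Measurable.mul measurable_const ?_) ?_) ?_
    · exact ((measurable_fst.add measurable_snd).const_mul b₀).pow_const _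
    · exact ((measurable_fst.pow_const _).const_mul _).mul
        (measurable_fst.const_mul (-b₀)).exp
    · exact ((measurable_snd.pow_const _).const_mul _).mul
        (measurable_snd.const_mul (-b₀)).exp

end Aux

/-- If `(λ₁, λ₂) ~ BG(b₀, a₀, a₁, a₂)`, then `U = λ₁ + λ₂ ~ Gamma(a₀, b₀)`,
`V = λ₁/(λ₁+λ₂) ~ Beta(a₁, a₂)` and `U`, `V` are independent: the pushforward of
`BG(b₀, a₀, a₁, a₂)` under `(λ₁, λ₂) ↦ (λ₁ + λ₂, λ₁/(λ₁+λ₂))` is the product measure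
`Gamma(a₀, b₀) ⊗ Beta(a₁, a₂)`. -/
theorem bg_pushforward_eq_gamma_prod_beta (b₀ a₀ a₁ a₂ : ℝ)
    (hb₀ : 0 < b₀) (ha₀ : 0 < a₀) (ha₁ : 0 < a₁) (ha₂ : 0 < a₂) :
    Measure.map (fun p : ℝ × ℝ => (p.1 + p.2, p.1 / (p.1 + p.2))) (bgMeasure b₀ a₀ a₁ a₂) =
      (volume.withDensity fun u => ENNReal.ofReal (gammaPdfShapeRate a₀ b₀ u)).prod
        (volume.withDensity fun v => ENNReal.ofReal (betaPdf a₁ a₂ v)) := by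
  set T : ℝ × ℝ → ℝ × ℝ := fun p => (p.1 + p.2, p.1 / (p.1 + p.2)) with hTdef
  set Φ : ℝ × ℝ → ℝ × ℝ := fun p => (p.1 * p.2, p.1 * (1 - p.2)) with hΦdef
  have hT_meas : Measurable T :=
    (measurable_fst.add measurable_snd).prodMk
      (measurable_fst.div (measurable_fst.add measurable_snd))
  have hΦ_meas : Measurable Φ :=
    (measurable_fst.mul measurable_snd).prodMk
      (measurable_fst.mul (measurable_const.sub measurable_snd))
  set B : Set (ℝ × ℝ) := Ioi 0 ×ˢ Ioo 0 1 with hBdef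
  have hB : MeasurableSet B := measurableSet_Ioi.prod measurableSet_Ioo
  set S : Set (ℝ × ℝ) := Ioi 0 ×ˢ Ioi 0 with hSdef
  have hS : MeasurableSet S := measurableSet_Ioi.prod measurableSet_Ioi
  set g : ℝ × ℝ → ℝ≥0∞ := fun p => ENNReal.ofReal (bgPdf b₀ a₀ a₁ a₂ p.1 p.2) with hgdef
  have hg_meas : Measurable g := (measurable_bgPdf b₀ a₀ a₁ a₂).ennreal_ofReal
  set h : ℝ × ℝ → ℝ≥0∞ := fun p =>
    ENNReal.ofReal (gammaPdfShapeRate a₀ b₀ p.1) * ENNReal.ofReal (betaPdf a₁ a₂ p.2) with hhdef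
  -- image of B under Φ is S
  have himage : Φ '' B = S := by
    ext q
    constructor
    · rintro ⟨⟨u, v⟩, ⟨hu, hv⟩, rfl⟩
      simp only [mem_Ioi, mem_Ioo] at hu hv
      exact ⟨mul_pos hu hv.1, mul_pos hu (by linarith [hv.2])⟩
    · rintro ⟨hx, hy⟩
      simp only [mem_Ioi] at hx hy
      have hxy : 0 < q.1 + q.2 := by linarith
      refine ⟨(q.1 + q.2, q.1 / (q.1 + q.2)), ⟨hxy, div_pos hx hxy,
        (div_lt_one hxy).2 (by linarith)⟩, ?_⟩
      have h1 : (q.1 + q.2) * (q.1 / (q.1 + q.2)) = q.1 := by field_simp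
      have h2 : (q.1 + q.2) * (1 - q.1 / (q.1 + q.2)) = q.2 := by field_simp; ring
      simp only [hΦdef]
      rw [h1, h2]
  -- injectivity of Φ on B
  have hinj : InjOn Φ B := by
    rintro ⟨u, v⟩ ⟨hu, hv⟩ ⟨u', v'⟩ ⟨hu', hv'⟩ hq
    simp only [hΦdef, Prod.mk.injEq] at hq
    obtain ⟨h1, h2⟩ := hq
    simp only [mem_Ioi, mem_Ioo] at hu hv hu' hv'
    have huu : u = u' := by linarith [h1, h2]
    subst huu
    have : v = v' := mul_left_cancel₀ (ne_of_gt hu) h1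
    rw [this]
  -- change of variables
  have hderivW : ∀ p ∈ B, HasFDerivWithinAt Φ (bgPhiDeriv p) B p := fun p _ =>
    (hasFDerivAt_bgPhi p).hasFDerivWithinAt
  have hcov : Measure.map Φ ((volume.restrict B).withDensity
        fun p => ENNReal.ofReal |(bgPhiDeriv p).det|) = volume.restrict S := by
    rw [map_withDensity_abs_det_fderiv_eq_addHaar volume hB.nullMeasurableSet hderivW hinj, himage]
  have hD_meas : Measurable fun p : ℝ × ℝ => ENNReal.ofReal |(bgPhiDeriv p).det| := by
    simp only [bgPhiDeriv_det, abs_neg]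
    exact measurable_fst.abs.ennreal_ofReal
  -- key pointwise identity on B
  have hkey : ∀ p ∈ B, h p = ENNReal.ofReal |(bgPhiDeriv p).det| * g (Φ p) := by
    rintro ⟨u, v⟩ ⟨hu, hv⟩
    simp only [mem_Ioi, mem_Ioo] at hu hv
    have hgam : 0 ≤ gammaPdfShapeRate a₀ b₀ u := by
      rw [gammaPdfShapeRate, if_pos hu]
      have := Real.Gamma_pos_of_pos ha₀
      positivity
    simp only [hhdef, hgdef, hΦdef, bgPhiDeriv_det, abs_neg, abs_of_pos hu]
    rw [← ENNReal.ofReal_mul hgam, ← ENNReal.ofReal_mul hu.le,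
      bg_ident hb₀ hu hv.1 hv.2]
  -- bgMeasure as a pushforward
  have hbg : bgMeasure b₀ a₀ a₁ a₂ = Measure.map Φ ((volume.restrict B).withDensity h) := by
    have h1 : (volume.restrict B).withDensity h
        = (volume.restrict B).withDensity
            ((fun p => ENNReal.ofReal |(bgPhiDeriv p).det|) * (g ∘ Φ)) :=
      withDensity_congr_ae ((ae_restrict_iff' hB).2 (ae_of_all _ fun p hp => hkey p hp))
    rw [h1, withDensity_mul _ hD_meas (hg_meas.comp hΦ_meas),
      map_withDensity_comp' hΦ_meas hg_meas, hcov, ← withDensity_indicator hS]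
    have h2 : S.indicator g = g := by
      funext p
      by_cases hp : p ∈ S
      · rw [indicator_of_mem hp]
      · rw [indicator_of_notMem hp]
        have : ¬(0 < p.1 ∧ 0 < p.2) := by
          simpa [hSdef, Set.mem_prod, mem_Ioi] using hp
        simp only [hgdef, bgPdf, if_neg this, ENNReal.ofReal_zero]
    rw [h2]
    rfl
  -- RHS as withDensity over B
  have hh_ind : B.indicator h = h := by
    funext p
    by_cases hp : p ∈ B
    · rw [indicator_of_mem hp]
    · rw [indicator_of_notMem hp]
      simp only [hBdef, Set.mem_prod, mem_Ioi, mem_Ioo, not_and_or] at hp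
      rcases hp with hp | hp
      · have : ¬(0 < p.1) := hp
        simp only [hhdef, gammaPdfShapeRate, if_neg this, ENNReal.ofReal_zero, zero_mul]
      · have : ¬(0 < p.2 ∧ p.2 < 1) := by tauto
        simp only [hhdef, betaPdf, if_neg this, ENNReal.ofReal_zero, mul_zero]
  have hRHS : (volume.withDensity fun u => ENNReal.ofReal (gammaPdfShapeRate a₀ b₀ u)).prod
        (volume.withDensity fun v => ENNReal.ofReal (betaPdf a₁ a₂ v))
      = (volume.restrict B).withDensity h := by
    rw [prod_withDensity_volume' (measurable_gammaPdfShapeRate a₀ b₀) (measurable_betaPdf a₁ a₂),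
      ← withDensity_indicator hB, hh_ind]
  -- conclude
  rw [hbg, hRHS, Measure.map_map hT_meas hΦ_meas]
  have hae : T ∘ Φ =ᵐ[(volume.restrict B).withDensity h] id := by
    have hac : (volume.restrict B).withDensity h ≪ volume :=
      (withDensity_absolutelyContinuous _ _).trans
        (Measure.absolutelyContinuous_of_le Measure.restrict_le_self)
    refine hac ?_
    have hsub : {p : ℝ × ℝ | ¬(T ∘ Φ) p = id p} ⊆ {p : ℝ × ℝ | p.1 = 0} := by
      intro p hp
      by_contra hp1
      apply hp
      have e0 : p.1 * p.2 + p.1 * (1 - p.2) = p.1 := by ring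
      simp only [Function.comp_apply, hTdef, hΦdef, id_eq, e0]
      rw [mul_comm, mul_div_assoc, div_self hp1, mul_one]
    refine measure_mono_null hsub ?_
    have : {p : ℝ × ℝ | p.1 = 0} = ({0} : Set ℝ) ×ˢ (univ : Set ℝ) := by
      ext p
      constructor
      · intro hp; exact ⟨hp, mem_univ _⟩
      · intro hp; exact hp.1
    rw [this, Measure.volume_eq_prod, Measure.prod_prod, Real.volume_singleton, zero_mul]
  rw [Measure.map_congr hae, Measure.map_id]
end

section
/- Let b₀ > 0, a₀ > 0, a₁ > 0, a₂ > 0, W ≥ 0, and let D₁, D₂ be nonnegative integers with a₀ + D₁ + D₂ > 2. Let (λ₁, λ₂) have the Beta-Gamma distribution BG(W + b₀, a₀ + D₁ + D₂, a₁ + D₁, a₂ + D₂), and set θ₁ = 1/λ₁, θ₂ = 1/λ₂. For k = 1, 2 with a_k + D_k > 2, define A_k = (W + b₀)² (a₁ + a₂ + D₁ + D₂ − 1) / ((a₀ + D₁ + D₂ − 1)(a_k + D_k − 1)) and B_k = (a₁ + a₂ + D₁ + D₂ − 2) / ((a₀ + D₁ + D₂ − 2)(a_k + D_k − 2)) − (a₁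 + a₂ + D₁ + D₂ − 1) / ((a₀ + D₁ + D₂ − 1)(a_k + D_k − 1)). Then the posterior variances satisfy Var(θ₁) = A₁ B₁ and Var(θ₂) = A₂ B₂. -/
open MeasureTheory ProbabilityTheory
open Real Set
open scoped ENNReal

lemma lint_gamma {t b : ℝ} (ht : 0 < t) (hb : 0 < b) :
    ∫⁻ x in Ioi (0:ℝ), ENNReal.ofReal (x ^ (t-1) * Real.exp (-(b * x))) =
      ENNReal.ofReal (Real.Gamma t / b ^ t) := by
  have h1 := ProbabilityTheory.lintegral_gammaPDF_eq_one ht hb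
  have h2 : ∫⁻ x, ProbabilityTheory.gammaPDF t b x =
      ∫⁻ x in Ioi (0:ℝ), ENNReal.ofReal (b ^ t / Real.Gamma t) *
        ENNReal.ofReal (x ^ (t-1) * Real.exp (-(b * x))) := by
    rw [← lintegral_indicator measurableSet_Ioi]
    refine lintegral_congr_ae ?_
    filter_upwards [compl_mem_ae_iff.2 (volume_singleton (a := (0:ℝ)))] with x hx
    rcases lt_trichotomy x 0 with h | h | h
    · rw [ProbabilityTheory.gammaPDF_of_neg h, indicator_of_notMem (by simpa using h.le)]
    · exact absurd h hx
    · rw [ProbabilityTheory.gammaPDF_of_nonneg h.le, indicator_of_mem (mem_Ioi.2 h),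
        ← ENNReal.ofReal_mul (by positivity)]
      ring_nf
  rw [h2, lintegral_const_mul' _ _ ENNReal.ofReal_ne_top] at h1
  have hc : ENNReal.ofReal (b ^ t / Real.Gamma t) ≠ 0 := by
    simp [ENNReal.ofReal_eq_zero, not_le, div_pos (rpow_pos_of_pos hb t) (Gamma_pos_of_pos ht)]
  have := congrArg (· * ENNReal.ofReal (Real.Gamma t / b ^ t)) h1
  simp only [one_mul] at this
  rw [mul_comm, ← mul_assoc, ← ENNReal.ofReal_mul (by positivity)] at this
  rw [show Real.Gamma t / b ^ t * (b ^ t / Real.Gamma t) = 1 by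
    field_simp, ENNReal.ofReal_one, one_mul] at this
  exact this

lemma beta_cplx_eq {p q : ℝ} (hp : 0 < p) {x : ℝ} (hx : x ∈ Ioc (0:ℝ) 1) :
    (x:ℂ) ^ ((p:ℂ)-1) * (1-(x:ℂ)) ^ ((q:ℂ)-1) =
      ((x ^ (p-1) * (1-x) ^ (q-1) : ℝ) : ℂ) := by
  have h1 : ((p:ℂ)-1) = ((p-1 : ℝ) : ℂ) := by push_cast; ring
  have h2 : ((q:ℂ)-1) = ((q-1 : ℝ) : ℂ) := by push_cast; ring
  have h3 : (1-(x:ℂ)) = ((1-x : ℝ) : ℂ) := by push_cast; ring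
  rw [h1, h2, h3, ← Complex.ofReal_cpow hx.1.le, ← Complex.ofReal_cpow (by linarith [hx.2]),
    ← Complex.ofReal_mul]

lemma beta01_integrable {p q : ℝ} (hp : 0 < p) (hq : 0 < q) :
    IntegrableOn (fun x : ℝ => x ^ (p-1) * (1-x) ^ (q-1)) (Ioc 0 1) := by
  have hC := Complex.betaIntegral_convergent (u := p) (v := q) (by simpa using hp)
    (by simpa using hq)
  rw [intervalIntegrable_iff_integrableOn_Ioc_of_le zero_le_one] at hC
  refine (hC.re).congr ?_
  refine (ae_restrict_iff' measurableSet_Ioc).2 (ae_of_all _ fun x hx => ?_)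
  have h := beta_cplx_eq (q := q) hp hx
  simp only [h]
  simp

lemma beta01_integral {p q : ℝ} (hp : 0 < p) (hq : 0 < q) :
    ∫ x in Ioc (0:ℝ) 1, x ^ (p-1) * (1-x) ^ (q-1) =
      Real.Gamma p * Real.Gamma q / Real.Gamma (p+q) := by
  have hB := Complex.Gamma_mul_Gamma_eq_betaIntegral (s := p) (t := q) (by simpa using hp)
    (by simpa using hq)
  have hval : Complex.betaIntegral p q = ((∫ x in Ioc (0:ℝ) 1, x ^ (p-1) * (1-x) ^ (q-1) : ℝ) : ℂ) := by
    rw [Complex.betaIntegral, intervalIntegral.integral_of_le zero_le_one]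
    refine (setIntegral_congr_fun measurableSet_Ioc
      fun x hx => beta_cplx_eq (q := q) hp hx).trans ?_
    exact integral_ofReal
  rw [hval] at hB
  have hG : (Complex.Gamma (↑p + ↑q)) = ((Real.Gamma (p+q) : ℝ) : ℂ) := by
    rw [show ((p:ℂ) + q) = ((p+q : ℝ):ℂ) by push_cast; ring, Complex.Gamma_ofReal]
  rw [hG, Complex.Gamma_ofReal, Complex.Gamma_ofReal, ← Complex.ofReal_mul, ← Complex.ofReal_mul]
    at hB
  have := Complex.ofReal_injective hB
  have hGpos : 0 < Real.Gamma (p+q) := Real.Gamma_pos_of_pos (by linarith)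
  field_simp at this ⊢
  linarith [this]

lemma beta_pt {p q a : ℝ} (ha : 0 < a) {x : ℝ} (hx : x ∈ Ioo (0:ℝ) a) :
    x ^ (p-1) * (a-x) ^ (q-1) =
      a ^ (p+q-2) * ((a⁻¹*x) ^ (p-1) * (1-a⁻¹*x) ^ (q-1)) := by
  have hx0 : (0:ℝ) < x := hx.1
  have hax : (0:ℝ) < a - x := by linarith [hx.2]
  have h1 : (a⁻¹*x) ^ (p-1) = a ^ (-(p-1)) * x ^ (p-1) := by
    rw [Real.mul_rpow (by positivity) hx0.le, Real.inv_rpow ha.le, ← Real.rpow_neg ha.le]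
  have h2 : (1-a⁻¹*x) = a⁻¹ * (a-x) := by field_simp
  have h3 : (1-a⁻¹*x) ^ (q-1) = a ^ (-(q-1)) * (a-x) ^ (q-1) := by
    rw [h2, Real.mul_rpow (by positivity) hax.le, Real.inv_rpow ha.le, ← Real.rpow_neg ha.le]
  rw [h1, h3]
  rw [show a ^ (p+q-2) * (a ^ (-(p-1)) * x ^ (p-1) * (a ^ (-(q-1)) * (a-x) ^ (q-1))) =
    (a ^ (p+q-2) * a ^ (-(p-1)) * a ^ (-(q-1))) * (x ^ (p-1) * (a-x) ^ (q-1)) by ring]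
  rw [← Real.rpow_add ha, ← Real.rpow_add ha, show p+q-2 + -(p-1) + -(q-1) = 0 by ring,
    Real.rpow_zero, one_mul]

lemma beta_scaled_integrable {p q a : ℝ} (hp : 0 < p) (hq : 0 < q) (ha : 0 < a) :
    IntegrableOn (fun x : ℝ => x ^ (p-1) * (a-x) ^ (q-1)) (Ioo 0 a) := by
  have h01 : IntervalIntegrable (fun x : ℝ => x ^ (p-1) * (1-x) ^ (q-1)) volume 0 1 := by
    rw [intervalIntegrable_iff_integrableOn_Ioc_of_le zero_le_one]
    exact beta01_integrable hp hq
  have h2 := (h01.comp_mul_left (c := a⁻¹)).const_mul (a ^ (p+q-2))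
  rw [show (0:ℝ) / a⁻¹ = 0 by simp, show (1:ℝ) / a⁻¹ = a by field_simp,
    intervalIntegrable_iff_integrableOn_Ioc_of_le ha.le] at h2
  refine ((h2.mono_set Ioo_subset_Ioc_self).congr ?_)
  refine (ae_restrict_iff' measurableSet_Ioo).2 (ae_of_all _ fun x hx => ?_)
  exact (beta_pt ha hx).symm

lemma beta_scaled_integral {p q a : ℝ} (hp : 0 < p) (hq : 0 < q) (ha : 0 < a) :
    ∫ x in Ioo (0:ℝ) a, x ^ (p-1) * (a-x) ^ (q-1) =
      a ^ (p+q-1) * (Real.Gamma p * Real.Gamma q / Real.Gamma (p+q)) := by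
  have step1 : ∫ x in Ioo (0:ℝ) a, x ^ (p-1) * (a-x) ^ (q-1) =
      a ^ (p+q-2) * ∫ x in Ioo (0:ℝ) a, ((a⁻¹*x) ^ (p-1) * (1-a⁻¹*x) ^ (q-1)) := by
    rw [← integral_const_mul]
    exact setIntegral_congr_fun measurableSet_Ioo fun x hx => beta_pt ha hx
  have step2 : ∫ x in Ioo (0:ℝ) a, ((a⁻¹*x) ^ (p-1) * (1-a⁻¹*x) ^ (q-1)) =
      a * ∫ x in Ioo (0:ℝ) 1, x ^ (p-1) * (1-x) ^ (q-1) := by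
    rw [← integral_Ioc_eq_integral_Ioo, ← intervalIntegral.integral_of_le ha.le,
      intervalIntegral.integral_comp_mul_left (fun x => x ^ (p-1) * (1-x) ^ (q-1))
        (by positivity : a⁻¹ ≠ 0)]
    simp only [mul_zero, inv_inv, smul_eq_mul]
    rw [show a⁻¹ * a = 1 by field_simp, intervalIntegral.integral_of_le zero_le_one,
      integral_Ioc_eq_integral_Ioo]
  rw [step1, step2, ← mul_assoc, ← Real.rpow_add_one ha.ne',
    show p+q-2+1 = p+q-1 by ring, ← integral_Ioc_eq_integral_Ioo, beta01_integral hp hq]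

lemma beta_scaled_lintegral {p q a : ℝ} (hp : 0 < p) (hq : 0 < q) (ha : 0 < a) :
    ∫⁻ x in Ioo (0:ℝ) a, ENNReal.ofReal (x ^ (p-1) * (a-x) ^ (q-1)) =
      ENNReal.ofReal (a ^ (p+q-1) * (Real.Gamma p * Real.Gamma q / Real.Gamma (p+q))) := by
  rw [← beta_scaled_integral hp hq ha,
    ← ofReal_integral_eq_lintegral_ofReal (beta_scaled_integrable hp hq ha)]
  refine (ae_restrict_iff' measurableSet_Ioo).2 (ae_of_all _ fun x hx => ?_)
  have h1 : (0:ℝ) < x := hx.1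
  have h2 : (0:ℝ) < a - x := by linarith [hx.2]
  positivity
lemma key_lintegral {b p q c : ℝ} (hb : 0 < b) (hp : 0 < p) (hq : 0 < q)
    (hpqc : 0 < p+q+c) :
    ∫⁻ z : ℝ × ℝ in Ioi (0:ℝ) ×ˢ Ioi (0:ℝ),
      ENNReal.ofReal (z.1 ^ (p-1) * z.2 ^ (q-1) * (z.1+z.2) ^ c *
        Real.exp (-(b*(z.1+z.2)))) =
    ENNReal.ofReal (Real.Gamma p * Real.Gamma q * Real.Gamma (p+q+c) /
      (Real.Gamma (p+q) * b ^ (p+q+c))) := by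
  classical
  set T : Set (ℝ × ℝ) := {z | 0 < z.1 ∧ z.1 < z.2} with hT
  have hTmeas : MeasurableSet T := by
    have : T = {z : ℝ × ℝ | 0 < z.1} ∩ {z : ℝ × ℝ | z.1 < z.2} := rfl
    rw [this]
    exact (measurableSet_lt measurable_const measurable_fst).inter
      (measurableSet_lt measurable_fst measurable_snd)
  set H : ℝ × ℝ → ℝ≥0∞ := fun z =>
    ENNReal.ofReal (z.1 ^ (p-1) * (z.2-z.1) ^ (q-1) * z.2 ^ c * Real.exp (-(b*z.2))) with hH
  have hHmeas : Measurable H := by fun_prop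
  set K : ℝ × ℝ → ℝ≥0∞ := T.indicator H with hK
  have hKmeas : Measurable K := hHmeas.indicator hTmeas
  -- Step 1: LHS = ∫⁻ x, ∫⁻ s, K (x, s)
  have step1 : ∫⁻ z : ℝ × ℝ in Ioi (0:ℝ) ×ˢ Ioi (0:ℝ),
      ENNReal.ofReal (z.1 ^ (p-1) * z.2 ^ (q-1) * (z.1+z.2) ^ c *
        Real.exp (-(b*(z.1+z.2)))) = ∫⁻ x : ℝ, ∫⁻ s : ℝ, K (x, s) := by
    rw [Measure.volume_eq_prod, ← Measure.prod_restrict,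
      lintegral_prod _ (Measurable.aemeasurable (by fun_prop))]
    rw [← lintegral_indicator measurableSet_Ioi]
    refine lintegral_congr fun x => ?_
    rcases le_or_gt x 0 with hx | hx
    · rw [indicator_of_notMem (by simpa using hx)]
      have : ∀ s : ℝ, K (x, s) = 0 := fun s =>
        indicator_of_notMem (fun h => absurd h.1 (not_lt.2 hx)) _
      simp [this]
    · rw [indicator_of_mem (mem_Ioi.2 hx)]
      -- inner over y ∈ Ioi 0 of f(x+y)  =  over s ∈ Ioi x
      have sub : ∫⁻ y in Ioi (0:ℝ), H (x, x + y) = ∫⁻ s in Ioi x, H (x, s) := by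
        have := (measurePreserving_add_right volume x).setLIntegral_comp_emb
          (MeasurableEquiv.addRight x).measurableEmbedding (fun s => H (x, s)) (Ioi 0)
        rw [show (fun y : ℝ => y + x) '' Ioi 0 = Ioi x by
            have := image_add_const_Ioi (a := x) (b := (0:ℝ)); simpa using this] at this
        rw [← this]
        exact lintegral_congr fun y => by rw [add_comm]
      calc ∫⁻ y in Ioi (0:ℝ),
            ENNReal.ofReal (x ^ (p-1) * y ^ (q-1) * (x+y) ^ c * Real.exp (-(b*(x+y))))
          = ∫⁻ y in Ioi (0:ℝ), H (x, x + y) := by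
            refine setLIntegral_congr_fun measurableSet_Ioi (fun y hy => ?_)
            simp only [hH, add_sub_cancel_left]
        _ = ∫⁻ s in Ioi x, H (x, s) := sub
        _ = ∫⁻ s : ℝ, K (x, s) := by
            rw [← lintegral_indicator measurableSet_Ioi]
            refine lintegral_congr fun s => ?_
            by_cases hs : x < s
            · rw [indicator_of_mem (mem_Ioi.2 hs), hK,
                indicator_of_mem (by exact ⟨hx, hs⟩ : (x, s) ∈ T)]
            · rw [indicator_of_notMem (by simpa using hs), hK,
                indicator_of_notMem (fun h => hs h.2)]
  have hunc : AEMeasurable (Function.uncurry fun x s => K (x, s))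
      ((volume : Measure ℝ).prod volume) := by
    apply Measurable.aemeasurable
    exact hKmeas.comp (measurable_fst.prodMk measurable_snd)
  rw [step1, lintegral_lintegral_swap hunc]
  have hB : (0:ℝ) ≤ Real.Gamma p * Real.Gamma q / Real.Gamma (p+q) := by
    have := Real.Gamma_pos_of_pos hp
    have := Real.Gamma_pos_of_pos hq
    have := Real.Gamma_pos_of_pos (by linarith : (0:ℝ) < p + q)
    positivity
  have inner : ∀ s : ℝ, (∫⁻ x : ℝ, K (x, s)) =
      (Ioi (0:ℝ)).indicator (fun s =>
        ENNReal.ofReal (Real.Gamma p * Real.Gamma q / Real.Gamma (p+q)) *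
          ENNReal.ofReal (s ^ ((p+q+c)-1) * Real.exp (-(b*s)))) s := by
    intro s
    rcases le_or_gt s 0 with hs | hs
    · have : ∀ x : ℝ, K (x, s) = 0 := fun x =>
        indicator_of_notMem (fun h => absurd (h.1.trans h.2) (not_lt.2 hs)) _
      simp [this, indicator_of_notMem (by simpa using hs : s ∉ Ioi (0:ℝ))]
    · rw [indicator_of_mem (mem_Ioi.2 hs)]
      have e1 : (∫⁻ x : ℝ, K (x, s)) = ∫⁻ x in Ioo (0:ℝ) s, H (x, s) := by
        rw [← lintegral_indicator measurableSet_Ioo]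
        refine lintegral_congr fun x => ?_
        by_cases hx : x ∈ Ioo (0:ℝ) s
        · rw [indicator_of_mem hx, hK, indicator_of_mem (by exact ⟨hx.1, hx.2⟩ : (x, s) ∈ T)]
        · rw [indicator_of_notMem hx, hK,
            indicator_of_notMem (fun h => hx ⟨h.1, h.2⟩)]
      have e2 : ∫⁻ x in Ioo (0:ℝ) s, H (x, s) =
          (∫⁻ x in Ioo (0:ℝ) s, ENNReal.ofReal (x ^ (p-1) * (s-x) ^ (q-1))) *
            ENNReal.ofReal (s ^ c * Real.exp (-(b*s))) := by
        rw [← lintegral_mul_const' _ _ ENNReal.ofReal_ne_top]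
        refine setLIntegral_congr_fun measurableSet_Ioo (fun x hx => ?_)
        have h1 : (0:ℝ) < x := hx.1
        have h2 : (0:ℝ) < s - x := by have := hx.2; linarith
        simp only [hH]
        rw [show x ^ (p-1) * (s-x) ^ (q-1) * s ^ c * Real.exp (-(b*s)) =
          (x ^ (p-1) * (s-x) ^ (q-1)) * (s ^ c * Real.exp (-(b*s))) by ring]
        rw [ENNReal.ofReal_mul (by positivity)]
      rw [e1, e2, beta_scaled_lintegral hp hq hs, ← ENNReal.ofReal_mul (by positivity)]
      rw [show s ^ (p+q-1) * (Real.Gamma p * Real.Gamma q / Real.Gamma (p+q)) *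
          (s ^ c * Real.exp (-(b*s))) =
          (Real.Gamma p * Real.Gamma q / Real.Gamma (p+q)) *
            ((s ^ (p+q-1) * s ^ c) * Real.exp (-(b*s))) by ring]
      rw [← Real.rpow_add hs, show p+q-1+c = (p+q+c)-1 by ring,
        ENNReal.ofReal_mul hB]
  calc ∫⁻ s : ℝ, ∫⁻ x : ℝ, K (x, s)
      = ∫⁻ s : ℝ, (Ioi (0:ℝ)).indicator (fun s =>
          ENNReal.ofReal (Real.Gamma p * Real.Gamma q / Real.Gamma (p+q)) *
            ENNReal.ofReal (s ^ ((p+q+c)-1) * Real.exp (-(b*s)))) s :=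
        lintegral_congr inner
    _ = ∫⁻ s in Ioi (0:ℝ), ENNReal.ofReal (Real.Gamma p * Real.Gamma q / Real.Gamma (p+q)) *
          ENNReal.ofReal (s ^ ((p+q+c)-1) * Real.exp (-(b*s))) :=
        lintegral_indicator measurableSet_Ioi _
    _ = ENNReal.ofReal (Real.Gamma p * Real.Gamma q / Real.Gamma (p+q)) *
          ∫⁻ s in Ioi (0:ℝ), ENNReal.ofReal (s ^ ((p+q+c)-1) * Real.exp (-(b*s))) :=
        lintegral_const_mul' _ _ ENNReal.ofReal_ne_top
    _ = ENNReal.ofReal (Real.Gamma p * Real.Gamma q / Real.Gamma (p+q)) *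
          ENNReal.ofReal (Real.Gamma (p+q+c) / b ^ (p+q+c)) := by
        rw [lint_gamma hpqc hb]
    _ = ENNReal.ofReal (Real.Gamma p * Real.Gamma q * Real.Gamma (p+q+c) /
          (Real.Gamma (p+q) * b ^ (p+q+c))) := by
        rw [← ENNReal.ofReal_mul hB, div_mul_div_comm]

lemma bgPdf_nonneg {b A P Q : ℝ} (hb : 0 < b) (hA : 0 < A) (hP : 0 < P) (hQ : 0 < Q)
    (l₁ l₂ : ℝ) : 0 ≤ bgPdf b A P Q l₁ l₂ := by
  unfold bgPdf
  split_ifs with h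
  · have h1 := h.1
    have h2 := h.2
    have g1 := Real.Gamma_pos_of_pos hA
    have g2 := Real.Gamma_pos_of_pos hP
    have g3 := Real.Gamma_pos_of_pos hQ
    have g4 := Real.Gamma_pos_of_pos (show (0:ℝ) < P + Q by linarith)
    positivity
  · exact le_refl 0

lemma bgPdf_measurable (b A P Q : ℝ) :
    Measurable fun z : ℝ × ℝ => bgPdf b A P Q z.1 z.2 := by
  have h : (fun z : ℝ × ℝ => bgPdf b A P Q z.1 z.2) =
      ({z : ℝ × ℝ | 0 < z.1} ∩ {z : ℝ × ℝ | 0 < z.2}).indicator (fun z =>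
        Real.Gamma (P + Q) / Real.Gamma A * (b * (z.1 + z.2)) ^ (A - P - Q) *
        (b ^ P / Real.Gamma P * z.1 ^ (P - 1) * Real.exp (-b * z.1)) *
        (b ^ Q / Real.Gamma Q * z.2 ^ (Q - 1) * Real.exp (-b * z.2))) := by
    ext z
    unfold bgPdf
    by_cases h : 0 < z.1 ∧ 0 < z.2
    · rw [if_pos h, indicator_of_mem (by exact ⟨h.1, h.2⟩)]
    · rw [if_neg h, indicator_of_notMem (by simpa [mem_inter_iff] using h)]
  rw [h]
  exact Measurable.indicator (by fun_prop)
    ((measurableSet_lt measurable_const measurable_fst).inter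
      (measurableSet_lt measurable_const measurable_snd))

lemma bgPdf_eq {b A P Q : ℝ} (hb : 0 < b) {l₁ l₂ : ℝ} (h1 : 0 < l₁) (h2 : 0 < l₂) :
    bgPdf b A P Q l₁ l₂ =
      (Real.Gamma (P+Q) * b ^ A / (Real.Gamma A * Real.Gamma P * Real.Gamma Q)) *
      (l₁ ^ (P-1) * l₂ ^ (Q-1) * (l₁+l₂) ^ (A-P-Q) * Real.exp (-(b*(l₁+l₂)))) := by
  unfold bgPdf
  rw [if_pos ⟨h1, h2⟩]
  have e1 : (b*(l₁+l₂)) ^ (A-P-Q) = b ^ (A-P-Q) * (l₁+l₂) ^ (A-P-Q) :=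
    Real.mul_rpow hb.le (by positivity)
  have e2 : Real.exp (-b*l₁) * Real.exp (-b*l₂) = Real.exp (-(b*(l₁+l₂))) := by
    rw [← Real.exp_add]; ring_nf
  have e3 : b ^ (A-P-Q) * (b ^ P * b ^ Q) = b ^ A := by
    rw [← Real.rpow_add hb, ← Real.rpow_add hb]; ring_nf
  rw [e1, show Real.Gamma (P+Q) / Real.Gamma A * (b ^ (A-P-Q) * (l₁+l₂) ^ (A-P-Q)) *
      (b ^ P / Real.Gamma P * l₁ ^ (P-1) * Real.exp (-b*l₁)) *
      (b ^ Q / Real.Gamma Q * l₂ ^ (Q-1) * Real.exp (-b*l₂)) =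
      Real.Gamma (P+Q) / (Real.Gamma A * Real.Gamma P * Real.Gamma Q) *
        (b ^ (A-P-Q) * (b ^ P * b ^ Q)) *
        (l₁ ^ (P-1) * l₂ ^ (Q-1) * (l₁+l₂) ^ (A-P-Q) *
          (Real.exp (-b*l₁) * Real.exp (-b*l₂))) from by ring, e3, e2]
  ring

lemma bg_moment_fst {b A P Q r : ℝ} (hb : 0 < b) (hA : 0 < A) (hP : 0 < P) (hQ : 0 < Q)
    (hrP : r < P) (hrA : r < A) :
    ∫⁻ z : ℝ × ℝ, ENNReal.ofReal (bgPdf b A P Q z.1 z.2 * z.1 ^ (-r)) =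
      ENNReal.ofReal (b ^ r * (Real.Gamma (A-r) * Real.Gamma (P+Q) * Real.Gamma (P-r)) /
        (Real.Gamma A * Real.Gamma P * Real.Gamma (P+Q-r))) := by
  have gA := Real.Gamma_pos_of_pos hA
  have gP := Real.Gamma_pos_of_pos hP
  have gQ := Real.Gamma_pos_of_pos hQ
  have hC : (0:ℝ) ≤ Real.Gamma (P+Q) * b ^ A / (Real.Gamma A * Real.Gamma P * Real.Gamma Q) := by
    have := Real.Gamma_pos_of_pos (show (0:ℝ) < P + Q by linarith)
    positivity
  have step1 : ∫⁻ z : ℝ × ℝ, ENNReal.ofReal (bgPdf b A P Q z.1 z.2 * z.1 ^ (-r)) =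
      ENNReal.ofReal (Real.Gamma (P+Q) * b ^ A / (Real.Gamma A * Real.Gamma P * Real.Gamma Q)) *
      ∫⁻ z : ℝ × ℝ in Ioi (0:ℝ) ×ˢ Ioi (0:ℝ),
        ENNReal.ofReal (z.1 ^ ((P-r)-1) * z.2 ^ (Q-1) * (z.1+z.2) ^ (A-P-Q) *
          Real.exp (-(b*(z.1+z.2)))) := by
    rw [← lintegral_const_mul' _ _ ENNReal.ofReal_ne_top,
      ← lintegral_indicator (measurableSet_Ioi.prod measurableSet_Ioi)]
    refine lintegral_congr fun z => ?_
    by_cases h : 0 < z.1 ∧ 0 < z.2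
    · rw [indicator_of_mem (by exact ⟨h.1, h.2⟩ : z ∈ Ioi (0:ℝ) ×ˢ Ioi (0:ℝ)),
        bgPdf_eq hb h.1 h.2, mul_assoc, ← ENNReal.ofReal_mul hC]
      congr 1
      rw [show z.1 ^ (P-1) * z.2 ^ (Q-1) * (z.1+z.2) ^ (A-P-Q) * Real.exp (-(b*(z.1+z.2))) *
          z.1 ^ (-r) = (z.1 ^ (P-1) * z.1 ^ (-r)) * z.2 ^ (Q-1) * (z.1+z.2) ^ (A-P-Q) *
          Real.exp (-(b*(z.1+z.2))) by ring, ← Real.rpow_add h.1,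
        show P - 1 + -r = P - r - 1 by ring]
    · have hz : z ∉ Ioi (0:ℝ) ×ˢ Ioi (0:ℝ) := by
        simpa [Set.mem_prod, mem_Ioi] using h
      rw [indicator_of_notMem hz]
      unfold bgPdf
      rw [if_neg h, zero_mul, ENNReal.ofReal_zero]
  rw [step1, key_lintegral hb (by linarith : (0:ℝ) < P - r) hQ
      (by linarith : (0:ℝ) < (P-r) + Q + (A-P-Q))]
  rw [show (P-r) + Q + (A-P-Q) = A - r by ring, show P - r + Q = P+Q-r by ring,
    ← ENNReal.ofReal_mul hC]
  congr 1
  have gAr := Real.Gamma_pos_of_pos (show (0:ℝ) < A - r by linarith)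
  have gPQr := Real.Gamma_pos_of_pos (show (0:ℝ) < P+Q-r by linarith)
  have hbA : b ^ A = b ^ (A-r) * b ^ r := by
    rw [← Real.rpow_add hb]; ring_nf
  have hbAr : (0:ℝ) < b ^ (A-r) := Real.rpow_pos_of_pos hb _
  rw [hbA]
  field_simp

lemma bg_moment_snd {b A P Q r : ℝ} (hb : 0 < b) (hA : 0 < A) (hP : 0 < P) (hQ : 0 < Q)
    (hrQ : r < Q) (hrA : r < A) :
    ∫⁻ z : ℝ × ℝ, ENNReal.ofReal (bgPdf b A P Q z.1 z.2 * z.2 ^ (-r)) =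
      ENNReal.ofReal (b ^ r * (Real.Gamma (A-r) * Real.Gamma (P+Q) * Real.Gamma (Q-r)) /
        (Real.Gamma A * Real.Gamma Q * Real.Gamma (P+Q-r))) := by
  have gA := Real.Gamma_pos_of_pos hA
  have gP := Real.Gamma_pos_of_pos hP
  have gQ := Real.Gamma_pos_of_pos hQ
  have hC : (0:ℝ) ≤ Real.Gamma (P+Q) * b ^ A / (Real.Gamma A * Real.Gamma P * Real.Gamma Q) := by
    have := Real.Gamma_pos_of_pos (show (0:ℝ) < P + Q by linarith)
    positivity
  have step1 : ∫⁻ z : ℝ × ℝ, ENNReal.ofReal (bgPdf b A P Q z.1 z.2 * z.2 ^ (-r)) =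
      ENNReal.ofReal (Real.Gamma (P+Q) * b ^ A / (Real.Gamma A * Real.Gamma P * Real.Gamma Q)) *
      ∫⁻ z : ℝ × ℝ in Ioi (0:ℝ) ×ˢ Ioi (0:ℝ),
        ENNReal.ofReal (z.1 ^ (P-1) * z.2 ^ ((Q-r)-1) * (z.1+z.2) ^ (A-P-Q) *
          Real.exp (-(b*(z.1+z.2)))) := by
    rw [← lintegral_const_mul' _ _ ENNReal.ofReal_ne_top,
      ← lintegral_indicator (measurableSet_Ioi.prod measurableSet_Ioi)]
    refine lintegral_congr fun z => ?_
    by_cases h : 0 < z.1 ∧ 0 < z.2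
    · rw [indicator_of_mem (by exact ⟨h.1, h.2⟩ : z ∈ Ioi (0:ℝ) ×ˢ Ioi (0:ℝ)),
        bgPdf_eq hb h.1 h.2, mul_assoc, ← ENNReal.ofReal_mul hC]
      congr 1
      rw [show z.1 ^ (P-1) * z.2 ^ (Q-1) * (z.1+z.2) ^ (A-P-Q) * Real.exp (-(b*(z.1+z.2))) *
          z.2 ^ (-r) = z.1 ^ (P-1) * (z.2 ^ (Q-1) * z.2 ^ (-r)) * (z.1+z.2) ^ (A-P-Q) *
          Real.exp (-(b*(z.1+z.2))) by ring, ← Real.rpow_add h.2,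
        show Q - 1 + -r = Q - r - 1 by ring]
    · have hz : z ∉ Ioi (0:ℝ) ×ˢ Ioi (0:ℝ) := by
        simpa [Set.mem_prod, mem_Ioi] using h
      rw [indicator_of_notMem hz]
      unfold bgPdf
      rw [if_neg h, zero_mul, ENNReal.ofReal_zero]
  rw [step1, key_lintegral hb hP (by linarith : (0:ℝ) < Q - r)
      (by linarith : (0:ℝ) < P + (Q-r) + (A-P-Q))]
  rw [show P + (Q-r) + (A-P-Q) = A - r by ring, show P + (Q-r) = P+Q-r by ring,
    ← ENNReal.ofReal_mul hC]
  congr 1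
  have gAr := Real.Gamma_pos_of_pos (show (0:ℝ) < A - r by linarith)
  have gPQr := Real.Gamma_pos_of_pos (show (0:ℝ) < P+Q-r by linarith)
  have hbA : b ^ A = b ^ (A-r) * b ^ r := by
    rw [← Real.rpow_add hb]; ring_nf
  have hbAr : (0:ℝ) < b ^ (A-r) := Real.rpow_pos_of_pos hb _
  rw [hbA]
  field_simp

lemma bg_ae_quadrant (b A P Q : ℝ) :
    ∀ᵐ z : ℝ × ℝ ∂(bgMeasure b A P Q), 0 < z.1 ∧ 0 < z.2 := by
  rw [ae_iff]
  have hs : MeasurableSet {z : ℝ × ℝ | ¬(0 < z.1 ∧ 0 < z.2)} := by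
    have : {z : ℝ × ℝ | ¬(0 < z.1 ∧ 0 < z.2)} =
        ({z : ℝ × ℝ | 0 < z.1} ∩ {z : ℝ × ℝ | 0 < z.2})ᶜ := by
      ext z; simp [mem_inter_iff, not_and_or]
    rw [this]
    exact (((measurableSet_lt measurable_const measurable_fst).inter
      (measurableSet_lt measurable_const measurable_snd))).compl
  rw [bgMeasure, withDensity_apply _ hs]
  rw [show (0:ℝ≥0∞) = ∫⁻ _ in {z : ℝ × ℝ | ¬(0 < z.1 ∧ 0 < z.2)}, 0 by simp]
  refine setLIntegral_congr_fun hs (fun z hz => ?_)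
  unfold bgPdf
  rw [if_neg hz, ENNReal.ofReal_zero]

lemma bg_lint_pow_fst {b A P Q : ℝ} (hb : 0 < b) (hA : 0 < A) (hP : 0 < P) (hQ : 0 < Q)
    (n : ℕ) (hnP : (n:ℝ) < P) (hnA : (n:ℝ) < A) :
    ∫⁻ z : ℝ × ℝ, ENNReal.ofReal ((1/z.1) ^ n) ∂(bgMeasure b A P Q) =
      ENNReal.ofReal (b ^ (n:ℝ) *
        (Real.Gamma (A-n) * Real.Gamma (P+Q) * Real.Gamma (P-n)) /
        (Real.Gamma A * Real.Gamma P * Real.Gamma (P+Q-n))) := by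
  rw [bgMeasure, lintegral_withDensity_eq_lintegral_mul _
    ((bgPdf_measurable b A P Q).ennreal_ofReal) (by fun_prop)]
  rw [← bg_moment_fst hb hA hP hQ hnP hnA]
  refine lintegral_congr fun z => ?_
  simp only [Pi.mul_apply]
  by_cases h : 0 < z.1 ∧ 0 < z.2
  · rw [← ENNReal.ofReal_mul (bgPdf_nonneg hb hA hP hQ _ _)]
    congr 1
    rw [Real.rpow_neg h.1.le, Real.rpow_natCast]
    rw [one_div, inv_pow]
  · have hpdf : bgPdf b A P Q z.1 z.2 = 0 := by unfold bgPdf; rw [if_neg h]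
    rw [hpdf, ENNReal.ofReal_zero, zero_mul, zero_mul, ENNReal.ofReal_zero]

lemma bg_lint_pow_snd {b A P Q : ℝ} (hb : 0 < b) (hA : 0 < A) (hP : 0 < P) (hQ : 0 < Q)
    (n : ℕ) (hnQ : (n:ℝ) < Q) (hnA : (n:ℝ) < A) :
    ∫⁻ z : ℝ × ℝ, ENNReal.ofReal ((1/z.2) ^ n) ∂(bgMeasure b A P Q) =
      ENNReal.ofReal (b ^ (n:ℝ) *
        (Real.Gamma (A-n) * Real.Gamma (P+Q) * Real.Gamma (Q-n)) /
        (Real.Gamma A * Real.Gamma Q * Real.Gamma (P+Q-n))) := by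
  rw [bgMeasure, lintegral_withDensity_eq_lintegral_mul _
    ((bgPdf_measurable b A P Q).ennreal_ofReal) (by fun_prop)]
  rw [← bg_moment_snd hb hA hP hQ hnQ hnA]
  refine lintegral_congr fun z => ?_
  simp only [Pi.mul_apply]
  by_cases h : 0 < z.1 ∧ 0 < z.2
  · rw [← ENNReal.ofReal_mul (bgPdf_nonneg hb hA hP hQ _ _)]
    congr 1
    rw [Real.rpow_neg h.2.le, Real.rpow_natCast]
    rw [one_div, inv_pow]
  · have hpdf : bgPdf b A P Q z.1 z.2 = 0 := by unfold bgPdf; rw [if_neg h]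
    rw [hpdf, ENNReal.ofReal_zero, zero_mul, zero_mul, ENNReal.ofReal_zero]

lemma bg_isProbability {b A P Q : ℝ} (hb : 0 < b) (hA : 0 < A) (hP : 0 < P) (hQ : 0 < Q) :
    IsProbabilityMeasure (bgMeasure b A P Q) := by
  constructor
  have h := bg_lint_pow_fst hb hA hP hQ 0 (by simpa using hP) (by simpa using hA)
  simp only [pow_zero, Nat.cast_zero, sub_zero] at h
  rw [bgMeasure, withDensity_apply _ MeasurableSet.univ, Measure.restrict_univ]
  have h2 : ∫⁻ z : ℝ × ℝ, ENNReal.ofReal ((1:ℝ)) ∂(bgMeasure b A P Q) =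
      ∫⁻ z : ℝ × ℝ, ENNReal.ofReal (bgPdf b A P Q z.1 z.2) := by
    rw [bgMeasure, lintegral_withDensity_eq_lintegral_mul _
      ((bgPdf_measurable b A P Q).ennreal_ofReal) (by fun_prop)]
    simp
  rw [← h2, h, Real.rpow_zero, one_mul]
  rw [show Real.Gamma A * Real.Gamma (P+Q) * Real.Gamma P =
    Real.Gamma A * Real.Gamma P * Real.Gamma (P+Q) by ring, div_self ?_, ENNReal.ofReal_one]
  have gA := Real.Gamma_pos_of_pos hA
  have gP := Real.Gamma_pos_of_pos hP
  have gPQ := Real.Gamma_pos_of_pos (show (0:ℝ) < P + Q by linarith)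
  positivity

lemma bg_integrable_pow_fst {b A P Q : ℝ} (hb : 0 < b) (hA : 0 < A) (hP : 0 < P) (hQ : 0 < Q)
    (n : ℕ) (hnP : (n:ℝ) < P) (hnA : (n:ℝ) < A) :
    Integrable (fun z : ℝ × ℝ => (1/z.1) ^ n) (bgMeasure b A P Q) := by
  refine ⟨(by fun_prop : Measurable fun z : ℝ × ℝ => (1/z.1) ^ n).aestronglyMeasurable, ?_⟩
  have hae : 0 ≤ᵐ[bgMeasure b A P Q] fun z : ℝ × ℝ => (1/z.1) ^ n := by
    filter_upwards [bg_ae_quadrant b A P Q] with z hz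
    exact pow_nonneg (one_div_nonneg.2 hz.1.le) n
  rw [hasFiniteIntegral_iff_ofReal hae, bg_lint_pow_fst hb hA hP hQ n hnP hnA]
  exact ENNReal.ofReal_lt_top

lemma bg_integrable_pow_snd {b A P Q : ℝ} (hb : 0 < b) (hA : 0 < A) (hP : 0 < P) (hQ : 0 < Q)
    (n : ℕ) (hnQ : (n:ℝ) < Q) (hnA : (n:ℝ) < A) :
    Integrable (fun z : ℝ × ℝ => (1/z.2) ^ n) (bgMeasure b A P Q) := by
  refine ⟨(by fun_prop : Measurable fun z : ℝ × ℝ => (1/z.2) ^ n).aestronglyMeasurable, ?_⟩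
  have hae : 0 ≤ᵐ[bgMeasure b A P Q] fun z : ℝ × ℝ => (1/z.2) ^ n := by
    filter_upwards [bg_ae_quadrant b A P Q] with z hz
    exact pow_nonneg (one_div_nonneg.2 hz.2.le) n
  rw [hasFiniteIntegral_iff_ofReal hae, bg_lint_pow_snd hb hA hP hQ n hnQ hnA]
  exact ENNReal.ofReal_lt_top

lemma bg_integral_pow_fst {b A P Q : ℝ} (hb : 0 < b) (hA : 0 < A) (hP : 0 < P) (hQ : 0 < Q)
    (n : ℕ) (hnP : (n:ℝ) < P) (hnA : (n:ℝ) < A) :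
    ∫ z : ℝ × ℝ, (1/z.1) ^ n ∂(bgMeasure b A P Q) =
      b ^ (n:ℝ) * (Real.Gamma (A-n) * Real.Gamma (P+Q) * Real.Gamma (P-n)) /
        (Real.Gamma A * Real.Gamma P * Real.Gamma (P+Q-n)) := by
  have hae : 0 ≤ᵐ[bgMeasure b A P Q] fun z : ℝ × ℝ => (1/z.1) ^ n := by
    filter_upwards [bg_ae_quadrant b A P Q] with z hz
    exact pow_nonneg (one_div_nonneg.2 hz.1.le) n
  rw [integral_eq_lintegral_of_nonneg_ae hae
    (by fun_prop : Measurable fun z : ℝ × ℝ => (1/z.1) ^ n).aestronglyMeasurable,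
    bg_lint_pow_fst hb hA hP hQ n hnP hnA, ENNReal.toReal_ofReal]
  have g1 := Real.Gamma_pos_of_pos (show (0:ℝ) < A - n by linarith)
  have g2 := Real.Gamma_pos_of_pos (show (0:ℝ) < P + Q by linarith)
  have g3 := Real.Gamma_pos_of_pos (show (0:ℝ) < P - n by linarith)
  have g4 := Real.Gamma_pos_of_pos hA
  have g5 := Real.Gamma_pos_of_pos hP
  have g6 := Real.Gamma_pos_of_pos (show (0:ℝ) < P + Q - n by linarith)
  positivity

lemma bg_integral_pow_snd {b A P Q : ℝ} (hb : 0 < b) (hA : 0 < A) (hP : 0 < P) (hQ : 0 < Q)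
    (n : ℕ) (hnQ : (n:ℝ) < Q) (hnA : (n:ℝ) < A) :
    ∫ z : ℝ × ℝ, (1/z.2) ^ n ∂(bgMeasure b A P Q) =
      b ^ (n:ℝ) * (Real.Gamma (A-n) * Real.Gamma (P+Q) * Real.Gamma (Q-n)) /
        (Real.Gamma A * Real.Gamma Q * Real.Gamma (P+Q-n)) := by
  have hae : 0 ≤ᵐ[bgMeasure b A P Q] fun z : ℝ × ℝ => (1/z.2) ^ n := by
    filter_upwards [bg_ae_quadrant b A P Q] with z hz
    exact pow_nonneg (one_div_nonneg.2 hz.2.le) n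
  rw [integral_eq_lintegral_of_nonneg_ae hae
    (by fun_prop : Measurable fun z : ℝ × ℝ => (1/z.2) ^ n).aestronglyMeasurable,
    bg_lint_pow_snd hb hA hP hQ n hnQ hnA, ENNReal.toReal_ofReal]
  have g1 := Real.Gamma_pos_of_pos (show (0:ℝ) < A - n by linarith)
  have g2 := Real.Gamma_pos_of_pos (show (0:ℝ) < P + Q by linarith)
  have g3 := Real.Gamma_pos_of_pos (show (0:ℝ) < Q - n by linarith)
  have g4 := Real.Gamma_pos_of_pos hA
  have g5 := Real.Gamma_pos_of_pos hQ
  have g6 := Real.Gamma_pos_of_pos (show (0:ℝ) < P + Q - n by linarith)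
  positivity

lemma bg_variance_fst {b A P Q : ℝ} (hb : 0 < b) (hA : 2 < A) (hP : 2 < P) (hQ : 0 < Q) :
    variance (fun z : ℝ × ℝ => 1/z.1) (bgMeasure b A P Q) =
      b^2 * (P+Q-1) / ((A-1)*(P-1)) *
        ((P+Q-2) / ((A-2)*(P-2)) - (P+Q-1) / ((A-1)*(P-1))) := by
  have hA0 : (0:ℝ) < A := by linarith
  have hP0 : (0:ℝ) < P := by linarith
  haveI := bg_isProbability hb hA0 hP0 hQ
  have hmeas : AEStronglyMeasurable (fun z : ℝ × ℝ => 1/z.1) (bgMeasure b A P Q) :=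
    (by fun_prop : Measurable fun z : ℝ × ℝ => 1/z.1).aestronglyMeasurable
  have hint2 : Integrable (fun z : ℝ × ℝ => (1/z.1)^2) (bgMeasure b A P Q) :=
    bg_integrable_pow_fst hb hA0 hP0 hQ 2 (by push_cast; linarith) (by push_cast; linarith)
  have hmem : MemLp (fun z : ℝ × ℝ => 1/z.1) 2 (bgMeasure b A P Q) :=
    (memLp_two_iff_integrable_sq hmeas).2 hint2
  rw [ProbabilityTheory.variance_eq_sub hmem]
  have r1 : Real.Gamma A = (A-1) * Real.Gamma (A-1) := by
    have h := Real.Gamma_add_one (show A - 1 ≠ 0 by linarith)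
    rwa [show A - 1 + 1 = A by ring] at h
  have r2 : Real.Gamma (A-1) = (A-2) * Real.Gamma (A-2) := by
    have h := Real.Gamma_add_one (show A - 2 ≠ 0 by linarith)
    rwa [show A - 2 + 1 = A - 1 by ring] at h
  have p1 : Real.Gamma P = (P-1) * Real.Gamma (P-1) := by
    have h := Real.Gamma_add_one (show P - 1 ≠ 0 by linarith)
    rwa [show P - 1 + 1 = P by ring] at h
  have p2 : Real.Gamma (P-1) = (P-2) * Real.Gamma (P-2) := by
    have h := Real.Gamma_add_one (show P - 2 ≠ 0 by linarith)
    rwa [show P - 2 + 1 = P - 1 by ring] at h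
  have q1 : Real.Gamma (P+Q) = (P+Q-1) * Real.Gamma (P+Q-1) := by
    have h := Real.Gamma_add_one (show P + Q - 1 ≠ 0 by linarith)
    rwa [show P + Q - 1 + 1 = P + Q by ring] at h
  have q2 : Real.Gamma (P+Q-1) = (P+Q-2) * Real.Gamma (P+Q-2) := by
    have h := Real.Gamma_add_one (show P + Q - 2 ≠ 0 by linarith)
    rwa [show P + Q - 2 + 1 = P + Q - 1 by ring] at h
  have gA2 : Real.Gamma (A-2) ≠ 0 := (Real.Gamma_pos_of_pos (by linarith)).ne'
  have gP2 : Real.Gamma (P-2) ≠ 0 := (Real.Gamma_pos_of_pos (by linarith)).ne'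
  have gPQ2 : Real.Gamma (P+Q-2) ≠ 0 := (Real.Gamma_pos_of_pos (by linarith)).ne'
  have n1 : A - 1 ≠ 0 := by linarith
  have n2 : A - 2 ≠ 0 := by linarith
  have n3 : P - 1 ≠ 0 := by linarith
  have n4 : P - 2 ≠ 0 := by linarith
  have n5 : P + Q - 1 ≠ 0 := by linarith
  have n6 : P + Q - 2 ≠ 0 := by linarith
  have e1 : ∫ z : ℝ × ℝ, 1/z.1 ∂(bgMeasure b A P Q) = b * (P+Q-1)/((A-1)*(P-1)) := by
    have h := bg_integral_pow_fst hb hA0 hP0 hQ 1 (by push_cast; linarith)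
      (by push_cast; linarith)
    simp only [pow_one, Nat.cast_one] at h
    rw [h, Real.rpow_one, r1, r2, p1, p2, q1, q2]
    field_simp
  have e2 : ∫ z : ℝ × ℝ, (1/z.1)^2 ∂(bgMeasure b A P Q) =
      b^2 * ((P+Q-1)*(P+Q-2)) / ((A-1)*(A-2)*((P-1)*(P-2))) := by
    have h := bg_integral_pow_fst hb hA0 hP0 hQ 2 (by push_cast; linarith)
      (by push_cast; linarith)
    rw [show ((2:ℕ):ℝ) = (2:ℝ) by norm_num, show b ^ (2:ℝ) = b ^ 2 by
      rw [show (2:ℝ) = ((2:ℕ):ℝ) by norm_num, Real.rpow_natCast]] at h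
    rw [h, r1, r2, p1, p2, q1, q2]
    field_simp
  simp only [Pi.pow_apply]
  rw [e1, e2]
  field_simp

lemma bg_variance_snd {b A P Q : ℝ} (hb : 0 < b) (hA : 2 < A) (hP : 0 < P) (hQ : 2 < Q) :
    variance (fun z : ℝ × ℝ => 1/z.2) (bgMeasure b A P Q) =
      b^2 * (P+Q-1) / ((A-1)*(Q-1)) *
        ((P+Q-2) / ((A-2)*(Q-2)) - (P+Q-1) / ((A-1)*(Q-1))) := by
  have hA0 : (0:ℝ) < A := by linarith
  have hQ0 : (0:ℝ) < Q := by linarith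
  haveI := bg_isProbability hb hA0 hP hQ0
  have hmeas : AEStronglyMeasurable (fun z : ℝ × ℝ => 1/z.2) (bgMeasure b A P Q) :=
    (by fun_prop : Measurable fun z : ℝ × ℝ => 1/z.2).aestronglyMeasurable
  have hint2 : Integrable (fun z : ℝ × ℝ => (1/z.2)^2) (bgMeasure b A P Q) :=
    bg_integrable_pow_snd hb hA0 hP hQ0 2 (by push_cast; linarith) (by push_cast; linarith)
  have hmem : MemLp (fun z : ℝ × ℝ => 1/z.2) 2 (bgMeasure b A P Q) :=
    (memLp_two_iff_integrable_sq hmeas).2 hint2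
  rw [ProbabilityTheory.variance_eq_sub hmem]
  have r1 : Real.Gamma A = (A-1) * Real.Gamma (A-1) := by
    have h := Real.Gamma_add_one (show A - 1 ≠ 0 by linarith)
    rwa [show A - 1 + 1 = A by ring] at h
  have r2 : Real.Gamma (A-1) = (A-2) * Real.Gamma (A-2) := by
    have h := Real.Gamma_add_one (show A - 2 ≠ 0 by linarith)
    rwa [show A - 2 + 1 = A - 1 by ring] at h
  have p1 : Real.Gamma Q = (Q-1) * Real.Gamma (Q-1) := by
    have h := Real.Gamma_add_one (show Q - 1 ≠ 0 by linarith)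
    rwa [show Q - 1 + 1 = Q by ring] at h
  have p2 : Real.Gamma (Q-1) = (Q-2) * Real.Gamma (Q-2) := by
    have h := Real.Gamma_add_one (show Q - 2 ≠ 0 by linarith)
    rwa [show Q - 2 + 1 = Q - 1 by ring] at h
  have q1 : Real.Gamma (P+Q) = (P+Q-1) * Real.Gamma (P+Q-1) := by
    have h := Real.Gamma_add_one (show P + Q - 1 ≠ 0 by linarith)
    rwa [show P + Q - 1 + 1 = P + Q by ring] at h
  have q2 : Real.Gamma (P+Q-1) = (P+Q-2) * Real.Gamma (P+Q-2) := by
    have h := Real.Gamma_add_one (show P + Q - 2 ≠ 0 by linarith)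
    rwa [show P + Q - 2 + 1 = P + Q - 1 by ring] at h
  have gA2 : Real.Gamma (A-2) ≠ 0 := (Real.Gamma_pos_of_pos (by linarith)).ne'
  have gP2 : Real.Gamma (Q-2) ≠ 0 := (Real.Gamma_pos_of_pos (by linarith)).ne'
  have gPQ2 : Real.Gamma (P+Q-2) ≠ 0 := (Real.Gamma_pos_of_pos (by linarith)).ne'
  have n1 : A - 1 ≠ 0 := by linarith
  have n2 : A - 2 ≠ 0 := by linarith
  have n3 : Q - 1 ≠ 0 := by linarith
  have n4 : Q - 2 ≠ 0 := by linarith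
  have n5 : P + Q - 1 ≠ 0 := by linarith
  have n6 : P + Q - 2 ≠ 0 := by linarith
  have e1 : ∫ z : ℝ × ℝ, 1/z.2 ∂(bgMeasure b A P Q) = b * (P+Q-1)/((A-1)*(Q-1)) := by
    have h := bg_integral_pow_snd hb hA0 hP hQ0 1 (by push_cast; linarith)
      (by push_cast; linarith)
    simp only [pow_one, Nat.cast_one] at h
    rw [h, Real.rpow_one, r1, r2, p1, p2, q1, q2]
    field_simp
  have e2 : ∫ z : ℝ × ℝ, (1/z.2)^2 ∂(bgMeasure b A P Q) =
      b^2 * ((P+Q-1)*(P+Q-2)) / ((A-1)*(A-2)*((Q-1)*(Q-2))) := by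
    have h := bg_integral_pow_snd hb hA0 hP hQ0 2 (by push_cast; linarith)
      (by push_cast; linarith)
    rw [show ((2:ℕ):ℝ) = (2:ℝ) by norm_num, show b ^ (2:ℝ) = b ^ 2 by
      rw [show (2:ℝ) = ((2:ℕ):ℝ) by norm_num, Real.rpow_natCast]] at h
    rw [h, r1, r2, p1, p2, q1, q2]
    field_simp
  simp only [Pi.pow_apply]
  rw [e1, e2]
  field_simp

/-- Posterior variances: if `(λ₁, λ₂) ~ BG(W + b₀, a₀ + D₁ + D₂, a₁ + D₁, a₂ + D₂)` and
`θ_k = 1/λ_k`, then `Var(θ₁) = A₁ B₁` (when `a₁ + D₁ > 2`) and `Var(θ₂) = A₂ B₂`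
(when `a₂ + D₂ > 2`), with `A_k`, `B_k` as in the paper. -/
theorem posterior_variances (b₀ a₀ a₁ a₂ W : ℝ)
    (hb₀ : 0 < b₀) (ha₀ : 0 < a₀) (ha₁ : 0 < a₁) (ha₂ : 0 < a₂) (hW : 0 ≤ W)
    (D₁ D₂ : ℕ) (hpost : 2 < a₀ + D₁ + D₂) :
    (2 < a₁ + D₁ →
      variance (fun p : ℝ × ℝ => 1 / p.1)
          (bgMeasure (W + b₀) (a₀ + D₁ + D₂) (a₁ + D₁) (a₂ + D₂)) =
        ((W + b₀) ^ 2 * (a₁ + a₂ + D₁ + D₂ - 1) /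
            ((a₀ + D₁ + D₂ - 1) * (a₁ + D₁ - 1))) *
          ((a₁ + a₂ + D₁ + D₂ - 2) / ((a₀ + D₁ + D₂ - 2) * (a₁ + D₁ - 2)) -
            (a₁ + a₂ + D₁ + D₂ - 1) / ((a₀ + D₁ + D₂ - 1) * (a₁ + D₁ - 1)))) ∧
    (2 < a₂ + D₂ →
      variance (fun p : ℝ × ℝ => 1 / p.2)
          (bgMeasure (W + b₀) (a₀ + D₁ + D₂) (a₁ + D₁) (a₂ + D₂)) =
        ((W + b₀) ^ 2 * (a₁ + a₂ + D₁ + D₂ - 1) /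
            ((a₀ + D₁ + D₂ - 1) * (a₂ + D₂ - 1))) *
          ((a₁ + a₂ + D₁ + D₂ - 2) / ((a₀ + D₁ + D₂ - 2) * (a₂ + D₂ - 2)) -
            (a₁ + a₂ + D₁ + D₂ - 1) / ((a₀ + D₁ + D₂ - 1) * (a₂ + D₂ - 1)))) := by
  have hb : (0:ℝ) < W + b₀ := by linarith
  have hd1 : (0:ℝ) ≤ (D₁:ℝ) := Nat.cast_nonneg _
  have hd2 : (0:ℝ) ≤ (D₂:ℝ) := Nat.cast_nonneg _
  constructor
  · intro hP
    rw [bg_variance_fst hb hpost hP (by linarith)]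
    rw [show a₁ + (D₁:ℝ) + (a₂ + (D₂:ℝ)) = a₁ + a₂ + D₁ + D₂ by ring]
  · intro hQ
    rw [bg_variance_snd hb hpost (by linarith) hQ]
    rw [show a₁ + (D₁:ℝ) + (a₂ + (D₂:ℝ)) = a₁ + a₂ + D₁ + D₂ by ring]
end

section
/- Let b₀ > 0, a₀ > 0, a₁ > 0, a₂ > 0, W > 0, and let D₁, D₂ be nonnegative integers. Then there exists a constant c > 0 such that for all λ₁ > 0 and λ₂ > 0, e^{−W(λ₁+λ₂)} λ₁^{D₁} λ₂^{D₂} · π(λ₁, λ₂ | b₀, a₀, a₁, a₂) = c · π(λ₁, λ₂ | W + b₀, a₀ + D₁ + D₂, a₁ + D₁, a₂ + D₂), where π(·, · | b, α₀, α₁, α₂) denotes the BG(b, α₀, α₁, α₂) density. That is, the Beta-Gamma family is conjugate for the exponential competing risks likelihood: the posterior of (λ₁, λ₂) under a BG(b₀, a₀, a₁, a₂) prior and likelihood proportional to λ₁^{D₁} λ₂^{D₂} e^{−W(λ₁+λ₂)} is BG(W + b₀, a₀ + D₁ + D₂, a₁ + D₁, a₂ + D₂). -/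
open MeasureTheory

/-- Conjugacy of the Beta-Gamma family for the exponential competing risks likelihood:
`likelihood × prior density = c × posterior density` with posterior
`BG(W + b₀, a₀ + D₁ + D₂, a₁ + D₁, a₂ + D₂)` and some constant `c > 0`. -/
theorem bg_is_conjugate_prior (b₀ a₀ a₁ a₂ W : ℝ)
    (hb₀ : 0 < b₀) (ha₀ : 0 < a₀) (ha₁ : 0 < a₁) (ha₂ : 0 < a₂) (hW : 0 < W)
    (D₁ D₂ : ℕ) :
    ∃ c : ℝ, 0 < c ∧ ∀ l₁ l₂ : ℝ, 0 < l₁ → 0 < l₂ →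
      Real.exp (-W * (l₁ + l₂)) * l₁ ^ D₁ * l₂ ^ D₂ * bgPdf b₀ a₀ a₁ a₂ l₁ l₂ =
        c * bgPdf (W + b₀) (a₀ + D₁ + D₂) (a₁ + D₁) (a₂ + D₂) l₁ l₂ := by
  have hb : (0:ℝ) < W + b₀ := by positivity
  have hG0 : 0 < Real.Gamma a₀ := Real.Gamma_pos_of_pos ha₀
  have hG1 : 0 < Real.Gamma a₁ := Real.Gamma_pos_of_pos ha₁
  have hG2 : 0 < Real.Gamma a₂ := Real.Gamma_pos_of_pos ha₂
  have hG12 : 0 < Real.Gamma (a₁ + a₂) := Real.Gamma_pos_of_pos (by positivity)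
  have hG0' : 0 < Real.Gamma (a₀ + D₁ + D₂) := Real.Gamma_pos_of_pos (by positivity)
  have hG1' : 0 < Real.Gamma (a₁ + D₁) := Real.Gamma_pos_of_pos (by positivity)
  have hG2' : 0 < Real.Gamma (a₂ + D₂) := Real.Gamma_pos_of_pos (by positivity)
  have hG12' : 0 < Real.Gamma (a₁ + D₁ + (a₂ + D₂)) := Real.Gamma_pos_of_pos (by positivity)
  refine ⟨(Real.Gamma (a₁ + a₂) / Real.Gamma a₀ * (b₀ ^ a₁ / Real.Gamma a₁) *
      (b₀ ^ a₂ / Real.Gamma a₂)) * (b₀ / (W + b₀)) ^ (a₀ - a₁ - a₂) /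
      (Real.Gamma (a₁ + D₁ + (a₂ + D₂)) / Real.Gamma (a₀ + D₁ + D₂) *
        ((W + b₀) ^ (a₁ + D₁) / Real.Gamma (a₁ + D₁)) *
        ((W + b₀) ^ (a₂ + D₂) / Real.Gamma (a₂ + D₂))), ?_, ?_⟩
  · positivity
  intro l₁ l₂ hl₁ hl₂
  have hL : (0:ℝ) < l₁ + l₂ := by positivity
  rw [bgPdf, bgPdf, if_pos ⟨hl₁, hl₂⟩, if_pos ⟨hl₁, hl₂⟩]
  have h1 : (b₀ * (l₁ + l₂)) ^ (a₀ - a₁ - a₂) =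
      (b₀ / (W + b₀)) ^ (a₀ - a₁ - a₂) * ((W + b₀) * (l₁ + l₂)) ^ (a₀ - a₁ - a₂) := by
    rw [← Real.mul_rpow (by positivity) (by positivity)]
    congr 1
    field_simp
  have h2 : l₁ ^ (a₁ + (D₁:ℝ) - 1) = l₁ ^ (a₁ - 1) * l₁ ^ D₁ := by
    rw [show a₁ + (D₁:ℝ) - 1 = (a₁ - 1) + (D₁:ℝ) by ring, Real.rpow_add hl₁,
      Real.rpow_natCast]
  have h3 : l₂ ^ (a₂ + (D₂:ℝ) - 1) = l₂ ^ (a₂ - 1) * l₂ ^ D₂ := by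
    rw [show a₂ + (D₂:ℝ) - 1 = (a₂ - 1) + (D₂:ℝ) by ring, Real.rpow_add hl₂,
      Real.rpow_natCast]
  have h4 : Real.exp (-(W + b₀) * l₁) = Real.exp (-W * l₁) * Real.exp (-b₀ * l₁) := by
    rw [← Real.exp_add]; ring_nf
  have h5 : Real.exp (-(W + b₀) * l₂) = Real.exp (-W * l₂) * Real.exp (-b₀ * l₂) := by
    rw [← Real.exp_add]; ring_nf
  have h6 : Real.exp (-W * (l₁ + l₂)) = Real.exp (-W * l₁) * Real.exp (-W * l₂) := by
    rw [← Real.exp_add]; ring_nf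
  rw [h1, h2, h3, h4, h5, h6]
  field_simp
  ring
end

section
/- Let n ≥ 1 and j ≥ 1 be integers, let R₁, …, R_j be nonnegative integers with R₁ + ⋯ + R_j ≤ n − j, and set γ_v = n − v + 1 − Σ_{u=1}^{v−1} R_u for 1 ≤ v ≤ j + 1. Let θ > 0, T > 0, let i be an integer with 1 ≤ i ≤ j, and let t be a real number with t/i < 1/θ; write s = 1/θ − t/i > 0. Then ∫_{0 < z₁ < z₂ < ⋯ < z_j < T} exp(−s(Σ_{h=1}^{j} z_h (1 + R_h) + T γ_{j+1})) dz₁ ⋯ dz_j = s^{−j} Σ_{v=0}^{j} (−1)^v e^{−s T γ_{j−v+1}} / [ (∏_{h=1}^{v} (γ_{j+1−v} − γ_{j+1−v+h})) (∏_{h=1}^{j−v} (γ_h − γ_{j−v+1})) ]. (This identity is the computational content of the conditional moment generating function of θ̂₁ given J = j and D₁ = i in the case Z_{k:m:n} < T < Z_{m:m:n}.) -/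
open Finset

noncomputable def DD (g : ℝ → ℝ) (t : Finset ℝ) : ℝ :=
  ∑ x ∈ t, g x / ∏ y ∈ t.erase x, (x - y)

lemma DD_rec (g : ℝ → ℝ) (t : Finset ℝ) (x y : ℝ) (hx : x ∉ t) (hy : y ∉ t) (hxy : x ≠ y) :
    DD g (insert x (insert y t)) = (DD g (insert x t) - DD g (insert y t)) / (x - y) := by
  have hsub : x - y ≠ 0 := sub_ne_zero.2 hxy
  rw [eq_div_iff hsub]
  have hxyt : x ∉ insert y t := by simp [hxy, hx]
  have hyxt : y ∉ insert x t := by simp [Ne.symm hxy, hy]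
  unfold DD
  rw [Finset.sum_insert hxyt, Finset.sum_insert hy, Finset.sum_insert hx,
    Finset.sum_insert hy, Finset.erase_insert hxyt, Finset.erase_insert hy,
    Finset.erase_insert hx]
  have e1 : (insert x (insert y t)).erase y = insert x t := by
    rw [Finset.insert_comm, Finset.erase_insert hyxt]
  rw [e1, Finset.prod_insert hy, Finset.prod_insert hx]
  have hPx : (∏ w ∈ t, (x - w)) ≠ 0 :=
    Finset.prod_ne_zero_iff.2 fun w hw => sub_ne_zero.2 (fun h => hx (h ▸ hw))
  have hPy : (∏ w ∈ t, (y - w)) ≠ 0 :=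
    Finset.prod_ne_zero_iff.2 fun w hw => sub_ne_zero.2 (fun h => hy (h ▸ hw))
  have key : ∀ z ∈ t,
      g z / (∏ w ∈ (insert x (insert y t)).erase z, (z - w)) * (x - y)
      = g z / ∏ w ∈ (insert x t).erase z, (z - w) - g z / ∏ w ∈ (insert y t).erase z, (z - w) := by
    intro z hz
    have hzx : z ≠ x := fun h => hx (h ▸ hz)
    have hzy : z ≠ y := fun h => hy (h ▸ hz)
    have hxe : x ∉ insert y (t.erase z) := by
      simp only [Finset.mem_insert, not_or]
      exact ⟨hxy, fun h => hx (Finset.erase_subset _ _ h)⟩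
    have hye : y ∉ t.erase z := fun h => hy (Finset.erase_subset _ _ h)
    have hxe' : x ∉ t.erase z := fun h => hx (Finset.erase_subset _ _ h)
    have E1 : (insert x (insert y t)).erase z = insert x (insert y (t.erase z)) := by
      rw [Finset.erase_insert_of_ne hzx.symm, Finset.erase_insert_of_ne hzy.symm]
    have E2 : (insert x t).erase z = insert x (t.erase z) := by
      rw [Finset.erase_insert_of_ne hzx.symm]
    have E3 : (insert y t).erase z = insert y (t.erase z) := by
      rw [Finset.erase_insert_of_ne hzy.symm]
    rw [E1, E2, E3, Finset.prod_insert hxe, Finset.prod_insert hye, Finset.prod_insert hxe']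
    have hP : (∏ w ∈ t.erase z, (z - w)) ≠ 0 :=
      Finset.prod_ne_zero_iff.2 fun w hw => sub_ne_zero.2 (Finset.ne_of_mem_erase hw).symm
    have h1 : z - x ≠ 0 := sub_ne_zero.2 hzx
    have h2 : z - y ≠ 0 := sub_ne_zero.2 hzy
    field_simp
    ring
  rw [add_mul, add_mul, Finset.sum_mul, Finset.sum_congr rfl key, Finset.sum_sub_distrib]
  have e2 : g x / ((x - y) * ∏ w ∈ t, (x - w)) * (x - y) = g x / ∏ w ∈ t, (x - w) := by
    field_simp
  have hyx : y - x ≠ 0 := sub_ne_zero.2 (Ne.symm hxy)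
  have e3 : g y / ((y - x) * ∏ w ∈ t, (y - w)) * (x - y) = -(g y / ∏ w ∈ t, (y - w)) := by
    rw [div_mul_eq_mul_div, ← neg_div, div_eq_div_iff (mul_ne_zero hyx hPy) hPy]
    ring
  rw [e2, e3]
  ring

lemma sum_eq_DD {k : ℕ} (a : Fin k → ℝ) (ha : Function.Injective a) (g : ℝ → ℝ) :
    ∑ w, g (a w) / ∏ m ∈ ({w}ᶜ : Finset (Fin k)), (a w - a m)
      = DD g (Finset.univ.image a) := by
  unfold DD
  rw [Finset.sum_image (fun x _ y _ h => ha h)]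
  refine Finset.sum_congr rfl fun w _ => ?_
  congr 1
  rw [← Finset.image_erase ha, Finset.prod_image (fun x _ y _ h => ha h),
    Finset.compl_singleton]

open MeasureTheory
def SS (k : ℕ) (T : ℝ) : Set (Fin k → ℝ) := {z | StrictMono z ∧ ∀ h, 0 < z h ∧ z h < T}

noncomputable def low : ∀ {k : ℕ}, (Fin k → ℝ) → ℝ
  | 0, _ => 0
  | _+1, w => w (Fin.last _)

lemma measurableSet_SS (k : ℕ) (T : ℝ) : MeasurableSet (SS k T) := by
  have h1 : MeasurableSet {z : Fin k → ℝ | StrictMono z} := by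
    have e : {z : Fin k → ℝ | StrictMono z}
        = ⋂ (p : Fin k) (q : Fin k) (_ : p < q), {z | z p < z q} := by
      ext z
      simp only [Set.mem_setOf_eq, Set.mem_iInter]
      exact ⟨fun hz p q h => hz h, fun hz _ _ h => hz _ _ h⟩
    rw [e]
    exact .iInter fun p => .iInter fun q => .iInter fun _ =>
      measurableSet_lt (measurable_pi_apply p) (measurable_pi_apply q)
  have h2 : MeasurableSet {z : Fin k → ℝ | ∀ h, 0 < z h ∧ z h < T} := by
    have e : {z : Fin k → ℝ | ∀ h, 0 < z h ∧ z h < T}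
        = ⋂ (h : Fin k), ({z : Fin k → ℝ | 0 < z h} ∩ {z | z h < T}) := by
      ext z; simp [Set.mem_iInter, forall_and]
    rw [e]
    exact .iInter fun h => (measurableSet_lt measurable_const (measurable_pi_apply h)).inter
      (measurableSet_lt (measurable_pi_apply h) measurable_const)
  exact h1.inter h2

lemma SS_subset (k : ℕ) (T : ℝ) : SS k T ⊆ Set.univ.pi fun _ : Fin k => Set.Icc (0:ℝ) T :=
  fun z hz i _ => ⟨(hz.2 i).1.le, (hz.2 i).2.le⟩

lemma integrableOn_SS {k : ℕ} {T : ℝ} {f : (Fin k → ℝ) → ℝ} (hf : Continuous f) :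
    IntegrableOn f (SS k T) := by
  exact (hf.continuousOn.integrableOn_compact
    (isCompact_univ_pi fun _ => isCompact_Icc)).mono_set (SS_subset k T)

lemma low_lt {k : ℕ} {T : ℝ} (hT : 0 < T) {w : Fin k → ℝ} (hw : w ∈ SS k T) :
    0 ≤ low w ∧ low w < T := by
  cases k with
  | zero => exact ⟨le_refl _, hT⟩
  | succ m => exact ⟨(hw.2 (Fin.last m)).1.le, (hw.2 (Fin.last m)).2⟩

lemma snoc_mem_iff {k : ℕ} {T : ℝ} (w : Fin k → ℝ) (y : ℝ) :
    (Fin.snoc w y ∈ SS (k+1) T) ↔ (w ∈ SS k T ∧ y ∈ Set.Ioo (low w) T) := by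
  cases k with
  | zero =>
      constructor
      · rintro ⟨-, hb⟩
        have := hb (Fin.last 0)
        rw [Fin.snoc_last] at this
        refine ⟨⟨fun {i j} h => absurd (Fin.ext (by omega : (i:ℕ) = j)) (ne_of_lt h), fun h => h.elim0⟩, this.1, this.2⟩
      · rintro ⟨-, hy⟩
        refine ⟨fun {i j} h => absurd (Fin.ext (by omega : (i:ℕ) = j)) (ne_of_lt h), fun h => ?_⟩
        have : h = Fin.last 0 := Fin.ext (by omega)
        rw [this, Fin.snoc_last]
        exact ⟨hy.1, hy.2⟩
  | succ m =>
      constructor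
      · rintro ⟨hm, hb⟩
        refine ⟨⟨fun {i j} hij => ?_, fun h => ?_⟩, ?_, ?_⟩
        · have := hm (Fin.castSucc_lt_castSucc_iff.2 hij)
          rwa [Fin.snoc_castSucc, Fin.snoc_castSucc] at this
        · have := hb h.castSucc
          rwa [Fin.snoc_castSucc] at this
        · have := hm (Fin.castSucc_lt_last (Fin.last m))
          rwa [Fin.snoc_castSucc, Fin.snoc_last] at this
        · have := hb (Fin.last (m+1))
          rw [Fin.snoc_last] at this
          exact this.2
      · rintro ⟨⟨hm, hb⟩, hy1, hy2⟩
        constructor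
        · rw [Fin.strictMono_iff_lt_succ]
          intro i
          refine Fin.lastCases ?_ (fun i' => ?_) i
          · rw [Fin.succ_last, Fin.snoc_last, Fin.snoc_castSucc]
            exact hy1
          · rw [Fin.succ_castSucc, Fin.snoc_castSucc, Fin.snoc_castSucc]
            exact hm Fin.castSucc_lt_succ
        · intro h
          refine Fin.lastCases ?_ (fun h' => ?_) h
          · rw [Fin.snoc_last]
            exact ⟨lt_trans (hb (Fin.last m)).1 hy1, hy2⟩
          · rw [Fin.snoc_castSucc]
            exact hb h'

lemma integral_exp_Ioo (b p q : ℝ) (hb : b ≠ 0) (hpq : p ≤ q) :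
    ∫ y in Set.Ioo p q, Real.exp (b * y) = (Real.exp (b * q) - Real.exp (b * p)) / b := by
  rw [← MeasureTheory.integral_Ioc_eq_integral_Ioo, ← intervalIntegral.integral_of_le hpq,
    intervalIntegral.integral_comp_mul_left (fun x => Real.exp x) hb, integral_exp,
    smul_eq_mul]
  field_simp

open MeasureTheory
lemma injOn_range {N : ℕ} {a : ℕ → ℝ} (ha : ∀ u v : ℕ, u < v → v < N → a v < a u) :
    ∀ x ∈ Finset.range N, ∀ y ∈ Finset.range N, a x = a y → x = y := by
  intro x hx y hy hxy
  simp only [Finset.mem_range] at hx hy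
  by_contra hne
  rcases lt_or_gt_of_ne hne with h | h
  · exact absurd hxy (ne_of_gt (ha x y h hy))
  · exact absurd hxy (ne_of_lt (ha y x h hx))

lemma sum_range_eq_DD (N : ℕ) (a : ℕ → ℝ) (ha : ∀ u v : ℕ, u < v → v < N → a v < a u)
    (g : ℝ → ℝ) :
    ∑ w ∈ Finset.range N, g (a w) / ∏ m ∈ (Finset.range N).erase w, (a w - a m)
      = DD g ((Finset.range N).image a) := by
  have inj := injOn_range ha
  unfold DD
  rw [Finset.sum_image inj]
  refine Finset.sum_congr rfl fun w hw => ?_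
  congr 1
  have hset : ((Finset.range N).image a).erase (a w) = ((Finset.range N).erase w).image a := by
    ext b
    simp only [Finset.mem_erase, Finset.mem_image]
    constructor
    · rintro ⟨hb, m, hm, rfl⟩
      exact ⟨m, ⟨fun h => hb (h ▸ rfl), hm⟩, rfl⟩
    · rintro ⟨m, ⟨hmw, hm⟩, rfl⟩
      exact ⟨fun h => hmw (inj m hm w hw h), m, hm, rfl⟩
  rw [hset, Finset.prod_image (fun x hx y hy h =>
    inj x (Finset.erase_subset _ _ hx) y (Finset.erase_subset _ _ hy) h)]

lemma key_lemma (k : ℕ) : ∀ (s T : ℝ), 0 < s → 0 < T → ∀ a : ℕ → ℝ,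
    (∀ u v : ℕ, u < v → v ≤ k → a v < a u) →
    (∫ z in SS k T, Real.exp (-s * ((∑ h : Fin k, z h * (a h.1 - a (h.1+1))) + T * a k)))
    = (-1:ℝ)^k * s ^ (-(k:ℤ)) *
      ∑ w ∈ Finset.range (k+1), Real.exp (-s*T*a w)
        / ∏ m ∈ (Finset.range (k+1)).erase w, (a w - a m) := by
  induction k with
  | zero =>
      intro s T hs hT a ha
      have hSS : SS 0 T = Set.univ := Set.eq_univ_of_forall fun z =>
        ⟨fun {i j} h => i.elim0, fun h => h.elim0⟩
      have hvol : (volume : Measure (Fin 0 → ℝ)) Set.univ = 1 := by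
        rw [MeasureTheory.volume_pi, MeasureTheory.Measure.pi_univ]
        simp
      rw [hSS, MeasureTheory.setIntegral_univ]
      simp only [Finset.range_one, Finset.sum_singleton, Finset.erase_singleton,
        Finset.prod_empty, Fin.sum_univ_zero, pow_zero, Nat.cast_zero, neg_zero, zpow_zero]
      rw [MeasureTheory.integral_const, MeasureTheory.measureReal_def, hvol]
      simp only [ENNReal.toReal_one, one_smul, one_mul, div_one]
      rw [Finset.range_one]
      simp only [Finset.sum_singleton, Finset.erase_singleton, Finset.prod_empty, inv_one,
        mul_one]
      congr 1
      ring
  | succ k IH =>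
      intro s T hs hT a ha
      have hak : a (k+1) < a k := ha k (k+1) (by omega) (le_refl _)
      set a' : ℕ → ℝ := Function.update a k (a (k+1)) with ha'def
      have hup : ∀ x : ℕ, x ≠ k → a' x = a x := fun x hx => Function.update_of_ne hx _ _
      have hupk : a' k = a (k+1) := Function.update_self _ _ _
      set c : ℝ := s * (a k - a (k+1)) with hcdef
      have hcne : c ≠ 0 := ne_of_gt (mul_pos hs (sub_pos.2 hak))
      set b : ℝ := -s * (a k - a (k+1)) with hbdef
      have hbne : b ≠ 0 := by
        rw [hbdef]; rw [neg_mul]; exact neg_ne_zero.2 hcne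
      set F1 : (Fin k → ℝ) → ℝ := fun w =>
        Real.exp (-s * ((∑ h : Fin k, w h * (a' h.1 - a' (h.1+1))) + T * a' k)) with hF1def
      set F2 : (Fin k → ℝ) → ℝ := fun w =>
        Real.exp (-s * ((∑ h : Fin k, w h * (a h.1 - a (h.1+1))) + T * a k)) with hF2def
      set f : (Fin (k+1) → ℝ) → ℝ := fun z =>
        Real.exp (-s * ((∑ h : Fin (k+1), z h * (a h.1 - a (h.1+1))) + T * a (k+1))) with hfdef
      have hfc : Continuous f := by
        apply Real.continuous_exp.comp
        fun_prop
      have hmeas := measurableSet_SS (k+1) T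
      -- sum split under snoc
      have hsplit : ∀ (w : Fin k → ℝ) (y : ℝ),
          ∑ h : Fin (k+1), (Fin.snoc w y : Fin (k+1) → ℝ) h * (a h.1 - a (h.1+1))
            = (∑ h : Fin k, w h * (a h.1 - a (h.1+1))) + y * (a k - a (k+1)) := by
        intro w y
        rw [Fin.sum_univ_castSucc]
        simp [Fin.snoc_castSucc, Fin.snoc_last]
      -- claim A
      have sumA : ∀ w : Fin k → ℝ,
          ∑ h : Fin k, w h * (a' h.1 - a' (h.1+1))
            = (∑ h : Fin k, w h * (a h.1 - a (h.1+1))) + low w * (a k - a (k+1)) := by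
        intro w
        cases k with
        | zero => simp [low]
        | succ m =>
            rw [Fin.sum_univ_castSucc, Fin.sum_univ_castSucc]
            have hhead : ∀ h : Fin m,
                w h.castSucc * (a' h.castSucc.1 - a' (h.castSucc.1+1))
                  = w h.castSucc * (a h.castSucc.1 - a (h.castSucc.1+1)) := by
              intro h
              have hlt := h.isLt
              rw [hup h.castSucc.1 (by simp; omega), hup (h.castSucc.1+1) (by simp; omega)]
            rw [Finset.sum_congr rfl (fun h _ => hhead h)]
            have h1 : a' (Fin.last m).1 = a (Fin.last m).1 := hup _ (by simp)
            have h2 : a' ((Fin.last m).1 + 1) = a (m+2) := by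
              simp only [Fin.val_last]
              exact hupk
            rw [h1, h2]
            simp only [Fin.val_last, low]
            ring
      -- auxiliary anti facts
      have ha' : ∀ u v : ℕ, u < v → v ≤ k → a' v < a' u := by
        intro u v huv hvk
        rw [hup u (by omega)]
        rcases eq_or_lt_of_le hvk with rfl | hvlt
        · rw [hupk]
          exact ha u (v+1) (by omega) (by omega)
        · rw [hup v (by omega)]
          exact ha u v huv (by omega)
      -- the inner integral computation
      have hinner : ∀ w : Fin k → ℝ,
          (∫ y : ℝ, (SS (k+1) T).indicator f (Fin.snoc w y))
            = (SS k T).indicator (fun w => (F1 w - F2 w) / c) w := by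
        intro w
        by_cases hw : w ∈ SS k T
        · rw [Set.indicator_of_mem hw]
          set Cw : ℝ := -s * ((∑ h : Fin k, w h * (a h.1 - a (h.1+1))) + T * a (k+1)) with hCw
          have heq : ∀ y : ℝ, (SS (k+1) T).indicator f (Fin.snoc w y)
              = (Set.Ioo (low w) T).indicator (fun y => Real.exp Cw * Real.exp (b * y)) y := by
            intro y
            by_cases hy : y ∈ Set.Ioo (low w) T
            · rw [Set.indicator_of_mem hy, Set.indicator_of_mem ((snoc_mem_iff w y).2 ⟨hw, hy⟩)]
              simp only [hfdef]
              rw [hsplit w y, ← Real.exp_add, hCw, hbdef]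
              congr 1
              ring
            · rw [Set.indicator_of_notMem hy,
                Set.indicator_of_notMem (fun hmem => hy ((snoc_mem_iff w y).1 hmem).2)]
          simp only [heq]
          rw [MeasureTheory.integral_indicator measurableSet_Ioo,
            MeasureTheory.integral_const_mul,
            integral_exp_Ioo b (low w) T hbne (low_lt hT hw).2.le]
          have e1 : Real.exp Cw * Real.exp (b*T) = F2 w := by
            simp only [hF2def]
            rw [← Real.exp_add, hCw, hbdef]
            congr 1
            ring
          have e2 : Real.exp Cw * Real.exp (b*(low w)) = F1 w := by
            simp only [hF1def]
            rw [← Real.exp_add, sumA w, hupk, hCw, hbdef]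
            congr 1
            ring
          have e3 : Real.exp Cw * ((Real.exp (b*T) - Real.exp (b*(low w)))/b)
              = (Real.exp Cw * Real.exp (b*T) - Real.exp Cw * Real.exp (b*(low w)))/b := by
            ring
          rw [e3, e1, e2]
          have hbc : b = -c := by rw [hbdef, hcdef]; ring
          rw [hbc, div_neg, ← neg_div, neg_sub]
        · rw [Set.indicator_of_notMem hw]
          have hzero : ∀ y : ℝ, (SS (k+1) T).indicator f (Fin.snoc w y) = 0 := fun y =>
            Set.indicator_of_notMem (fun hmem => hw ((snoc_mem_iff w y).1 hmem).1) f
          simp only [hzero, MeasureTheory.integral_zero]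
      -- main computation
      rw [← MeasureTheory.integral_indicator hmeas]
      have mp := (MeasureTheory.volume_preserving_piFinSuccAbove
        (fun _ : Fin (k+1) => ℝ) (Fin.last k)).symm
      rw [← mp.integral_comp (MeasurableEquiv.measurableEmbedding _) ((SS (k+1) T).indicator f)]
      have hsymm : ∀ p : ℝ × (Fin k → ℝ),
          (MeasurableEquiv.piFinSuccAbove (fun _ : Fin (k+1) => ℝ) (Fin.last k)).symm p
            = Fin.snoc p.2 p.1 := by
        intro p
        rw [MeasurableEquiv.piFinSuccAbove_symm_apply]
        ext j
        rw [Fin.insertNthEquiv_apply]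
        rw [Fin.insertNth_last']
      simp_rw [hsymm]
      have hind : Integrable ((SS (k+1) T).indicator f) (volume : Measure (Fin (k+1) → ℝ)) :=
        (MeasureTheory.integrable_indicator_iff hmeas).2 (integrableOn_SS hfc)
      have hint : Integrable (fun p : ℝ × (Fin k → ℝ) =>
          (SS (k+1) T).indicator f (Fin.snoc p.2 p.1))
          ((volume : Measure ℝ).prod (volume : Measure (Fin k → ℝ))) := by
        have h2 := (mp.integrable_comp_emb (MeasurableEquiv.measurableEmbedding _)).2 hind
        have : ((SS (k+1) T).indicator f) ∘
            (MeasurableEquiv.piFinSuccAbove (fun _ : Fin (k+1) => ℝ) (Fin.last k)).symm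
            = fun p : ℝ × (Fin k → ℝ) => (SS (k+1) T).indicator f (Fin.snoc p.2 p.1) := by
          funext p
          simp [Function.comp, hsymm]
        rw [this] at h2
        rw [← MeasureTheory.Measure.volume_eq_prod]
        exact h2
      rw [show (volume : Measure (ℝ × (Fin k → ℝ)))
        = (volume : Measure ℝ).prod (volume : Measure (Fin k → ℝ))
        from MeasureTheory.Measure.volume_eq_prod _ _]
      rw [MeasureTheory.integral_prod_symm _ hint]
      simp_rw [hinner]
      rw [MeasureTheory.integral_indicator (measurableSet_SS k T)]
      have hcont1 : Continuous F1 := by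
        simp only [hF1def]
        apply Real.continuous_exp.comp
        fun_prop
      have hcont2 : Continuous F2 := by
        simp only [hF2def]
        apply Real.continuous_exp.comp
        fun_prop
      have hi1 : IntegrableOn F1 (SS k T) volume := integrableOn_SS hcont1
      have hi2 : IntegrableOn F2 (SS k T) volume := integrableOn_SS hcont2
      have split : (∫ w in SS k T, (F1 w - F2 w)/c)
          = ((∫ w in SS k T, F1 w) - ∫ w in SS k T, F2 w)/c := by
        simp_rw [div_eq_mul_inv]
        rw [MeasureTheory.integral_mul_const, MeasureTheory.integral_sub hi1 hi2]
      rw [split]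
      simp only [hF1def, hF2def]
      rw [IH s T hs hT a' ha', IH s T hs hT a (fun u v h1 h2 => ha u v h1 (by omega))]
      -- convert to DD form
      rw [sum_range_eq_DD (k+1) a' (fun u v h1 h2 => ha' u v h1 (by omega))
        (fun u => Real.exp (-s*T*u)),
        sum_range_eq_DD (k+1) a (fun u v h1 h2 => ha u v h1 (by omega))
        (fun u => Real.exp (-s*T*u)),
        sum_range_eq_DD (k+2) a (fun u v h1 h2 => ha u v h1 (by omega))
        (fun u => Real.exp (-s*T*u))]
      have hI2 : ((Finset.range (k+1)).image a) = insert (a k) ((Finset.range k).image a) := by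
        rw [Finset.range_add_one, Finset.image_insert]
      have hI3 : ((Finset.range (k+1)).image a') = insert (a (k+1)) ((Finset.range k).image a) := by
        rw [Finset.range_add_one, Finset.image_insert, hupk]
        congr 1
        apply Finset.image_congr
        intro x hx
        simp only [Finset.coe_range, Set.mem_Iio] at hx
        exact hup x (by omega)
      have hI1 : ((Finset.range (k+2)).image a)
          = insert (a (k+1)) (insert (a k) ((Finset.range k).image a)) := by
        rw [show k+2 = (k+1)+1 from rfl, Finset.range_add_one, Finset.image_insert, hI2]
      have hxmem : a (k+1) ∉ (Finset.range k).image a := by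
        intro h
        obtain ⟨m, hm, hme⟩ := Finset.mem_image.1 h
        simp only [Finset.mem_range] at hm
        exact absurd hme (ne_of_gt (ha m (k+1) (by omega) (by omega)))
      have hymem : a k ∉ (Finset.range k).image a := by
        intro h
        obtain ⟨m, hm, hme⟩ := Finset.mem_image.1 h
        simp only [Finset.mem_range] at hm
        exact absurd hme (ne_of_gt (ha m k (by omega) (by omega)))
      rw [hI3, hI2, hI1,
        DD_rec (fun u => Real.exp (-s*T*u)) ((Finset.range k).image a) (a (k+1)) (a k)
          hxmem hymem (ne_of_lt hak)]
      have hzp : ∀ m : ℕ, s ^ (-(m:ℤ)) = (s^m)⁻¹ := fun m => by rw [zpow_neg, zpow_natCast]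
      rw [hzp k, hzp (k+1), pow_succ, hcdef]
      have hsne : s ≠ 0 := ne_of_gt hs
      have hane : a k - a (k+1) ≠ 0 := sub_ne_zero.2 (ne_of_gt hak)
      have hane' : a (k+1) - a k ≠ 0 := sub_ne_zero.2 (ne_of_lt hak)
      have hsk : (s:ℝ)^k ≠ 0 := pow_ne_zero _ hsne
      field_simp
      ring

/-- `γ_v = n − v + 1 − Σ_{u=1}^{v−1} R_u`, the number of surviving units at the time of the
`v`-th failure in a progressive censoring scheme with removals `R 1, R 2, …`. -/
noncomputable def gam (n : ℕ) (R : ℕ → ℕ) (v : ℕ) : ℝ :=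
  (n : ℝ) - v + 1 - ∑ u ∈ Finset.Icc 1 (v - 1), (R u : ℝ)

lemma gam_sub (n : ℕ) (R : ℕ → ℕ) (v : ℕ) (hv : 1 ≤ v) :
    gam n R v - gam n R (v+1) = 1 + (R v : ℝ) := by
  obtain ⟨m, rfl⟩ : ∃ m, v = m + 1 := ⟨v - 1, by omega⟩
  unfold gam
  rw [show m + 1 + 1 - 1 = m + 1 from rfl, show m + 1 - 1 = m from rfl,
    Finset.sum_Icc_succ_top (by omega)]
  push_cast
  ring

lemma gam_anti (n : ℕ) (R : ℕ → ℕ) : ∀ u v : ℕ, 1 ≤ u → u < v → gam n R v < gam n R u := by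
  intro u v hu huv
  induction v with
  | zero => omega
  | succ m IH =>
      have h : gam n R m - gam n R (m+1) = 1 + (R m : ℝ) := gam_sub n R m (by omega)
      rcases Nat.lt_or_ge u m with h2 | h2
      · have := IH h2
        have hpos : (0:ℝ) ≤ (R m : ℝ) := Nat.cast_nonneg _
        linarith
      · have : u = m := by omega
        subst this
        have hpos : (0:ℝ) ≤ (R u : ℝ) := Nat.cast_nonneg _
        linarith


/-- The iterated integral over the ordered simplex `{0 < z₁ < ⋯ < z_j < T}` of
`exp(−s(Σ_{h=1}^{j} z_h (1 + R_h) + T γ_{j+1}))` equals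
`s^{−j} Σ_{v=0}^{j} (−1)^v e^{−s T γ_{j−v+1}} / [⋯]`; this is the computational content
of the conditional MGF of `θ̂₁` given `J = j`, `D₁ = i` when `Z_{k:m:n} < T < Z_{m:m:n}`. -/
theorem mgf_integral_case_T (n j : ℕ) (hn : 1 ≤ n) (hj : 1 ≤ j) (R : ℕ → ℕ)
    (hR : (∑ u ∈ Finset.Icc 1 j, R u) + j ≤ n)
    (θ T : ℝ) (hθ : 0 < θ) (hT : 0 < T)
    (i : ℕ) (hi1 : 1 ≤ i) (hij : i ≤ j)
    (t s : ℝ) (ht : t / i < 1 / θ) (hs : s = 1 / θ - t / i) :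
    ∫ z in {z : Fin j → ℝ | StrictMono z ∧ ∀ h, 0 < z h ∧ z h < T},
        Real.exp (-s * ((∑ h, z h * (1 + (R (h.1 + 1) : ℝ))) + T * gam n R (j + 1))) =
      s ^ (-(j : ℤ)) *
        ∑ v ∈ Finset.range (j + 1),
          (-1 : ℝ) ^ v * Real.exp (-s * T * gam n R (j - v + 1)) /
            ((∏ h ∈ Finset.Icc 1 v, (gam n R (j + 1 - v) - gam n R (j + 1 - v + h))) *
              (∏ h ∈ Finset.Icc 1 (j - v), (gam n R h - gam n R (j - v + 1)))) := by
  have hs0 : 0 < s := by rw [hs]; exact sub_pos.2 ht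
  set a : ℕ → ℝ := fun v => gam n R (v + 1) with hadef
  have hanti : ∀ u v : ℕ, u < v → v ≤ j → a v < a u := by
    intro u v huv _
    exact gam_anti n R (u+1) (v+1) (by omega) (by omega)
  -- rewrite the integrand
  have hintg : (fun z : Fin j → ℝ =>
      Real.exp (-s * ((∑ h : Fin j, z h * (1 + (R (h.1 + 1) : ℝ))) + T * gam n R (j + 1))))
      = fun z : Fin j → ℝ =>
      Real.exp (-s * ((∑ h : Fin j, z h * (a h.1 - a (h.1+1))) + T * a j)) := by
    funext z
    have hsum : (∑ h : Fin j, z h * (1 + (R (h.1 + 1) : ℝ)))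
        = ∑ h : Fin j, z h * (a h.1 - a (h.1+1)) := by
      refine Finset.sum_congr rfl fun h _ => ?_
      simp only [hadef]
      rw [gam_sub n R (h.1+1) (by omega)]
    rw [hsum]
  have hset : {z : Fin j → ℝ | StrictMono z ∧ ∀ h, 0 < z h ∧ z h < T} = SS j T := rfl
  rw [hset]
  rw [hintg]
  rw [key_lemma j s T hs0 hT a hanti]
  -- now match the sums
  have hterm : ∀ w ∈ Finset.range (j+1),
      (-1:ℝ)^j * (Real.exp (-s*T*a w) / ∏ m ∈ (Finset.range (j+1)).erase w, (a w - a m))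
      = (fun v => (-1 : ℝ) ^ v * Real.exp (-s * T * gam n R (j - v + 1)) /
            ((∏ h ∈ Finset.Icc 1 v, (gam n R (j + 1 - v) - gam n R (j + 1 - v + h))) *
              (∏ h ∈ Finset.Icc 1 (j - v), (gam n R h - gam n R (j - v + 1))))) (j - w) := by
    intro w hw
    simp only [Finset.mem_range] at hw
    have hwj : w ≤ j := by omega
    simp only
    have e1 : j - (j - w) + 1 = w + 1 := by omega
    have e2 : j + 1 - (j - w) = w + 1 := by omega
    have e3 : j - (j - w) = w := by omega
    rw [e1, e2, e3]
    -- split the product over the erased range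
    have hsplitset : (Finset.range (j+1)).erase w
        = (Finset.range w) ∪ (Finset.Icc (w+1) j) := by
      ext m
      simp only [Finset.mem_erase, Finset.mem_range, Finset.mem_union, Finset.mem_Icc]
      omega
    have hdisj : Disjoint (Finset.range w) (Finset.Icc (w+1) j) := by
      rw [Finset.disjoint_left]
      intro m hm hm2
      simp only [Finset.mem_range] at hm
      simp only [Finset.mem_Icc] at hm2
      omega
    rw [hsplitset, Finset.prod_union hdisj]
    -- first factor
    have himg1 : Finset.Icc 1 w = (Finset.range w).image (· + 1) := by
      ext m
      simp only [Finset.mem_Icc, Finset.mem_image, Finset.mem_range]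
      constructor
      · intro h; exact ⟨m - 1, by omega, by omega⟩
      · rintro ⟨m', hm', rfl⟩; omega
    have hP1 : ∏ m ∈ Finset.range w, (a w - a m)
        = (-1:ℝ)^w * ∏ h ∈ Finset.Icc 1 w, (gam n R h - gam n R (w+1)) := by
      rw [himg1, Finset.prod_image (fun x _ y _ h => by omega)]
      rw [show ((-1:ℝ)^w) = ∏ m ∈ Finset.range w, (-1:ℝ) from by
        rw [Finset.prod_const, Finset.card_range]]
      rw [← Finset.prod_mul_distrib]
      refine Finset.prod_congr rfl fun m hm => ?_
      rw [hadef]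
      simp only
      ring
    -- second factor
    have himg2 : Finset.Icc (w+1) j = (Finset.Icc 1 (j-w)).image (fun h => w + h) := by
      ext m
      simp only [Finset.mem_Icc, Finset.mem_image]
      constructor
      · intro h; exact ⟨m - w, by omega, by omega⟩
      · rintro ⟨m', hm', rfl⟩; omega
    have hP2 : ∏ m ∈ Finset.Icc (w+1) j, (a w - a m)
        = ∏ h ∈ Finset.Icc 1 (j-w), (gam n R (w+1) - gam n R (w+1+h)) := by
      rw [himg2, Finset.prod_image (fun x _ y _ h => by omega)]
      refine Finset.prod_congr rfl fun m hm => ?_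
      rw [hadef]
      simp only
      congr 2
      omega
    rw [hP1, hP2]
    have hQ1 : (∏ h ∈ Finset.Icc 1 w, (gam n R h - gam n R (w+1))) ≠ 0 := by
      refine Finset.prod_ne_zero_iff.2 fun h hh => ?_
      simp only [Finset.mem_Icc] at hh
      exact sub_ne_zero.2 (ne_of_gt (gam_anti n R h (w+1) (by omega) (by omega)))
    have hQ2 : (∏ h ∈ Finset.Icc 1 (j-w), (gam n R (w+1) - gam n R (w+1+h))) ≠ 0 := by
      refine Finset.prod_ne_zero_iff.2 fun h hh => ?_
      simp only [Finset.mem_Icc] at hh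
      exact sub_ne_zero.2 (ne_of_gt (gam_anti n R (w+1) (w+1+h) (by omega) (by omega)))
    have hpow : ((-1:ℝ))^j = (-1:ℝ)^(j-w) * (-1:ℝ)^w := by
      rw [← pow_add]
      congr 1
      omega
    have haw : a w = gam n R (w+1) := rfl
    rw [haw, hpow]
    have hm1 : ((-1:ℝ))^w ≠ 0 := pow_ne_zero _ (by norm_num)
    field_simp
  calc (-1:ℝ)^j * s ^ (-(j:ℤ)) *
        ∑ w ∈ Finset.range (j+1), Real.exp (-s*T*a w)
          / ∏ m ∈ (Finset.range (j+1)).erase w, (a w - a m)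
      = s ^ (-(j:ℤ)) * ∑ w ∈ Finset.range (j+1),
          (-1:ℝ)^j * (Real.exp (-s*T*a w) / ∏ m ∈ (Finset.range (j+1)).erase w, (a w - a m)) := by
        simp only [Finset.mul_sum]
        exact Finset.sum_congr rfl fun w _ => by ring
    _ = s ^ (-(j:ℤ)) * ∑ w ∈ Finset.range (j+1),
          (fun v => (-1 : ℝ) ^ v * Real.exp (-s * T * gam n R (j - v + 1)) /
            ((∏ h ∈ Finset.Icc 1 v, (gam n R (j + 1 - v) - gam n R (j + 1 - v + h))) *
              (∏ h ∈ Finset.Icc 1 (j - v), (gam n R h - gam n R (j - v + 1))))) (j - w) := by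
        rw [Finset.sum_congr rfl hterm]
    _ = s ^ (-(j:ℤ)) *
        ∑ v ∈ Finset.range (j + 1),
          (-1 : ℝ) ^ v * Real.exp (-s * T * gam n R (j - v + 1)) /
            ((∏ h ∈ Finset.Icc 1 v, (gam n R (j + 1 - v) - gam n R (j + 1 - v + h))) *
              (∏ h ∈ Finset.Icc 1 (j - v), (gam n R h - gam n R (j - v + 1)))) := by
        congr 1
        have := Finset.sum_range_reflect (fun v => (-1 : ℝ) ^ v * Real.exp (-s * T * gam n R (j - v + 1)) /
            ((∏ h ∈ Finset.Icc 1 v, (gam n R (j + 1 - v) - gam n R (j + 1 - v + h))) *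
              (∏ h ∈ Finset.Icc 1 (j - v), (gam n R h - gam n R (j - v + 1))))) (j+1)
        simp only [Nat.add_sub_cancel] at this
        exact this
end
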